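/- Strong duality holds for the Q-REPS optimization problem: the maximum of ⟨p,r⟩ − (1/η)·D(p‖p₀) − (1/α)·H(d‖d₀) over probability distributions p, d on 𝒳×𝒜 satisfying Σ_a d(x,a) = γ·Σ_{x',a'} P(x|x',a')·p(x',a') + (1−γ)·ν₀(x) for all x and Σ_{x,a} d(x,a)·φ(x,a) = Σ_{x,a} p(x,a)·φ(x,a), equals the minimum over θ ∈ ℝ^m of the logistic Bellman error G(θ) = (1/η)·log(Σ_{x,a} p₀(x,a)·e^{η·Δ_θ(x,a)}) + (1−γ)·Σ_x ν₀(x)·V_θ(x). -/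

import Mathlib

open Real Finset


/-- Finite Gibbs variational inequality. -/
lemma qreps_gibbs_ineq {ι : Type*} [Fintype ι] (w q f : ι → ℝ)
    (hw : ∀ i, 0 ≤ w i) (hw1 : ∑ i, w i = 1) (hq : ∀ i, 0 < q i) :
    (∑ i, w i * f i) - ∑ i, w i * Real.log (w i / q i)
      ≤ Real.log (∑ i, q i * Real.exp (f i)) := by
  have hZ : 0 < ∑ i, q i * Real.exp (f i) := by
    have : Nonempty ι := by
      by_contra h
      rw [Finset.univ_eq_empty_iff.mpr (not_nonempty_iff.mp h), Finset.sum_empty] at hw1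
      exact one_ne_zero hw1.symm
    exact Finset.sum_pos (fun i _ => mul_pos (hq i) (Real.exp_pos _)) univ_nonempty
  set Z := ∑ i, q i * Real.exp (f i) with hZdef
  set g : ι → ℝ := fun i => q i * Real.exp (f i) / Z with hg
  have hgpos : ∀ i, 0 < g i := fun i => div_pos (mul_pos (hq i) (Real.exp_pos _)) hZ
  have hgsum : ∑ i, g i = 1 := by
    rw [hg]; rw [← Finset.sum_div]; exact div_self hZ.ne'
  -- pointwise : w i * log (g i / w i) ≤ g i - w i
  have key : ∀ i, w i * Real.log (g i / w i) ≤ g i - w i := by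
    intro i
    rcases eq_or_lt_of_le (hw i) with h0 | h0
    · simp [← h0]; exact (hgpos i).le
    · have h1 : 0 < g i / w i := div_pos (hgpos i) h0
      have := Real.log_le_sub_one_of_pos h1
      calc w i * Real.log (g i / w i) ≤ w i * (g i / w i - 1) := by
            exact mul_le_mul_of_nonneg_left this h0.le
        _ = g i - w i := by field_simp
  have hsum : ∑ i, w i * Real.log (g i / w i) ≤ 0 := by
    calc ∑ i, w i * Real.log (g i / w i) ≤ ∑ i, (g i - w i) := Finset.sum_le_sum (fun i _ => key i)
      _ = 0 := by rw [Finset.sum_sub_distrib, hgsum, hw1]; ring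
  -- identity: w i * log (g i / w i) = w i * f i - w i * log (w i / q i) - w i * log Z
  have hid : ∀ i, w i * Real.log (g i / w i)
      = w i * f i - w i * Real.log (w i / q i) - w i * Real.log Z := by
    intro i
    rcases eq_or_lt_of_le (hw i) with h0 | h0
    · simp [← h0]
    · have hqi := hq i
      have : Real.log (g i / w i) = f i - Real.log (w i / q i) - Real.log Z := by
        rw [hg]
        rw [Real.log_div (by positivity) h0.ne', Real.log_div (mul_pos hqi (Real.exp_pos _)).ne' hZ.ne',
          Real.log_mul hqi.ne' (Real.exp_pos _).ne', Real.log_exp,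
          Real.log_div h0.ne' hqi.ne']
        ring
      rw [this]; ring
  have : ∑ i, w i * Real.log (g i / w i)
      = (∑ i, w i * f i) - (∑ i, w i * Real.log (w i / q i)) - Real.log Z := by
    rw [Finset.sum_congr rfl (fun i _ => hid i)]
    rw [Finset.sum_sub_distrib, Finset.sum_sub_distrib, ← Finset.sum_mul, hw1, one_mul]
  linarith [hsum, this.symm.le]


/-- Two-point log-sum inequality (with Lean's junk-value conventions). -/
lemma qreps_logsum2 {a₁ a₂ b₁ b₂ : ℝ} (ha₁ : 0 ≤ a₁) (ha₂ : 0 ≤ a₂)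
    (hb₁ : 0 ≤ b₁) (hb₂ : 0 ≤ b₂) (h₁ : b₁ = 0 → a₁ = 0) (h₂ : b₂ = 0 → a₂ = 0) :
    (a₁ + a₂) * Real.log ((a₁ + a₂) / (b₁ + b₂))
      ≤ a₁ * Real.log (a₁ / b₁) + a₂ * Real.log (a₂ / b₂) := by
  rcases eq_or_lt_of_le hb₁ with hb₁0 | hb₁0
  · rw [h₁ hb₁0.symm, ← hb₁0]; simp
  rcases eq_or_lt_of_le hb₂ with hb₂0 | hb₂0
  · rw [h₂ hb₂0.symm, ← hb₂0]; simp
  have hs : 0 < b₁ + b₂ := by linarith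
  have hcx := Real.convexOn_mul_log.2 (Set.mem_Ici.mpr (div_nonneg ha₁ hb₁))
    (Set.mem_Ici.mpr (div_nonneg ha₂ hb₂))
    (le_of_lt (div_pos hb₁0 hs)) (le_of_lt (div_pos hb₂0 hs))
    (by field_simp)
  simp only [smul_eq_mul] at hcx
  have e1 : b₁ / (b₁ + b₂) * (a₁ / b₁) + b₂ / (b₁ + b₂) * (a₂ / b₂) = (a₁ + a₂) / (b₁ + b₂) := by
    field_simp
  rw [e1] at hcx
  have := mul_le_mul_of_nonneg_left hcx hs.le
  calc (a₁ + a₂) * Real.log ((a₁ + a₂) / (b₁ + b₂))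
      = (b₁ + b₂) * ((a₁ + a₂) / (b₁ + b₂) * Real.log ((a₁ + a₂) / (b₁ + b₂))) := by
        field_simp
    _ ≤ (b₁ + b₂) * (b₁ / (b₁ + b₂) * (a₁ / b₁ * Real.log (a₁ / b₁))
          + b₂ / (b₁ + b₂) * (a₂ / b₂ * Real.log (a₂ / b₂))) := this
    _ = a₁ * Real.log (a₁ / b₁) + a₂ * Real.log (a₂ / b₂) := by
        field_simp

/-- Convex-combination inequality for `ψ(u,v) = u log(u/v)`. -/
lemma qreps_psi_combo {l l' : ℝ} (hl : 0 ≤ l) (hl' : 0 ≤ l')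
    {u₁ v₁ u₂ v₂ : ℝ} (hu₁ : 0 ≤ u₁) (hu₂ : 0 ≤ u₂) (hv₁ : 0 ≤ v₁) (hv₂ : 0 ≤ v₂)
    (h₁ : v₁ = 0 → u₁ = 0) (h₂ : v₂ = 0 → u₂ = 0) :
    (l * u₁ + l' * u₂) * Real.log ((l * u₁ + l' * u₂) / (l * v₁ + l' * v₂))
      ≤ l * (u₁ * Real.log (u₁ / v₁)) + l' * (u₂ * Real.log (u₂ / v₂)) := by
  have key := qreps_logsum2 (a₁ := l * u₁) (a₂ := l' * u₂) (b₁ := l * v₁) (b₂ := l' * v₂)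
    (mul_nonneg hl hu₁) (mul_nonneg hl' hu₂) (mul_nonneg hl hv₁) (mul_nonneg hl' hv₂)
    (by intro h; rcases mul_eq_zero.mp h with h | h
        · rw [h, zero_mul]
        · rw [h₁ h, mul_zero])
    (by intro h; rcases mul_eq_zero.mp h with h | h
        · rw [h, zero_mul]
        · rw [h₂ h, mul_zero])
  refine key.trans (le_of_eq ?_)
  congr 1
  · rcases eq_or_lt_of_le hl with h | h
    · rw [← h]; ring
    · rw [mul_div_mul_left _ _ h.ne']; ring
  · rcases eq_or_lt_of_le hl' with h | h
    · rw [← h]; ring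
    · rw [mul_div_mul_left _ _ h.ne']; ring


/-- Existence of a (discounted) stationary distribution: fixed point of
`μ ↦ γ M μ + (1-γ) ν` where `M` is column-stochastic. -/
lemma qreps_exists_stationary {X : Type*} [Fintype X] [Nonempty X]
    (M : X → X → ℝ) (hM0 : ∀ x x', 0 ≤ M x x') (hM1 : ∀ x', ∑ x, M x x' = 1)
    {γ : ℝ} (hγ0 : 0 < γ) (hγ1 : γ < 1)
    (ν : X → ℝ) (hν0 : ∀ x, 0 ≤ ν x) (hν1 : ∑ x, ν x = 1) :
    ∃ μ : X → ℝ, (∀ x, 0 ≤ μ x) ∧ (∑ x, μ x = 1) ∧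
      ∀ x, μ x = γ * (∑ x', M x x' * μ x') + (1 - γ) * ν x := by
  classical
  -- work in ℓ¹
  let E := PiLp 1 (fun _ : X => ℝ)
  let T : E → E := fun v => WithLp.toLp 1 (fun x => γ * (∑ x', M x x' * v x') + (1 - γ) * ν x)
  have hnorm : ∀ v : E, ‖v‖ = ∑ x, |v x| := by
    intro v
    rw [PiLp.norm_eq_sum (by norm_num : (0:ℝ) < (1 : ENNReal).toReal)]
    simp [Real.norm_eq_abs]
  have hdist : ∀ v w : E, dist v w = ∑ x, |v x - w x| := by
    intro v w
    rw [dist_eq_norm, hnorm]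
    rfl
  have hLip : LipschitzWith ⟨γ, hγ0.le⟩ T := by
    apply LipschitzWith.of_dist_le_mul
    intro v w
    rw [hdist, hdist]
    show (∑ x, |T v x - T w x|) ≤ γ * ∑ x, |v x - w x|
    have : ∀ x, |T v x - T w x| ≤ γ * ∑ x', M x x' * |v x' - w x'| := by
      intro x
      have : T v x - T w x = γ * ∑ x', M x x' * (v x' - w x') := by
        simp only [T, WithLp.ofLp_toLp, Finset.mul_sum]
        have hpt : ∀ i, γ * (M x i * (v i - w i))
            = γ * (M x i * v i) - γ * (M x i * w i) := fun i => by ring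
        rw [Finset.sum_congr rfl (fun i _ => hpt i), Finset.sum_sub_distrib]
        ring
      rw [this, abs_mul, abs_of_pos hγ0]
      refine mul_le_mul_of_nonneg_left ?_ hγ0.le
      refine (Finset.abs_sum_le_sum_abs _ _).trans ?_
      refine Finset.sum_le_sum (fun x' _ => ?_)
      rw [abs_mul, abs_of_nonneg (hM0 x x')]
    calc (∑ x, |T v x - T w x|) ≤ ∑ x, γ * ∑ x', M x x' * |v x' - w x'| :=
          Finset.sum_le_sum (fun x _ => this x)
      _ = γ * ∑ x', (∑ x, M x x') * |v x' - w x'| := by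
          rw [← Finset.mul_sum, Finset.sum_comm]
          congr 1; refine Finset.sum_congr rfl (fun x' _ => ?_)
          rw [Finset.sum_mul]
      _ = γ * ∑ x', |v x' - w x'| := by
          congr 1; refine Finset.sum_congr rfl (fun x' _ => ?_)
          rw [hM1 x', one_mul]
  have hcontr : ContractingWith ⟨γ, hγ0.le⟩ T := by
    constructor
    · exact_mod_cast hγ1
    · exact hLip
  let μ : E := hcontr.fixedPoint T
  have hfix : T μ = μ := hcontr.fixedPoint_isFixedPt
  -- pointwise convergence of iterates
  have hptle : ∀ (v w : E) (x : X), |v x - w x| ≤ dist v w := by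
    intro v w x
    rw [hdist]
    exact Finset.single_le_sum (f := fun y => |v y - w y|) (fun y _ => abs_nonneg _) (Finset.mem_univ x)
  have htend := hcontr.tendsto_iterate_fixedPoint (x := (WithLp.toLp 1 (fun x => ν x) : E))
  have hiter_nonneg : ∀ n x, 0 ≤ (T^[n] (WithLp.toLp 1 (fun x => ν x) : E)) x := by
    intro n
    induction n with
    | zero => intro x; exact hν0 x
    | succ n ih =>
      intro x
      rw [Function.iterate_succ_apply']
      have : 0 ≤ ∑ x', M x x' * (T^[n] (WithLp.toLp 1 (fun x => ν x) : E)) x' :=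
        Finset.sum_nonneg (fun x' _ => mul_nonneg (hM0 x x') (ih x'))
      have h2 : (0:ℝ) ≤ 1 - γ := by linarith
      exact add_nonneg (mul_nonneg hγ0.le this) (mul_nonneg h2 (hν0 x))
  have hμ0 : ∀ x, 0 ≤ μ x := by
    intro x
    -- pointwise limit
    have hpt : Filter.Tendsto (fun n => (T^[n] (WithLp.toLp 1 (fun x => ν x) : E)) x) Filter.atTop (nhds (μ x)) := by
      rw [tendsto_iff_dist_tendsto_zero]
      have h0 : Filter.Tendsto (fun n => dist (T^[n] (WithLp.toLp 1 (fun x => ν x) : E)) μ) Filter.atTop (nhds 0) :=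
        tendsto_iff_dist_tendsto_zero.mp htend
      refine squeeze_zero (fun n => dist_nonneg) (fun n => ?_) h0
      rw [Real.dist_eq]
      exact hptle _ _ x
    exact le_of_tendsto_of_tendsto' tendsto_const_nhds hpt
      (fun n => hiter_nonneg n x)
  have heq : ∀ x, μ x = γ * (∑ x', M x x' * μ x') + (1 - γ) * ν x := by
    intro x
    conv_lhs => rw [← hfix]
  have hsum : ∑ x, μ x = 1 := by
    have : ∑ x, μ x = γ * ∑ x, μ x + (1 - γ) := by
      calc ∑ x, μ x = ∑ x, (γ * (∑ x', M x x' * μ x') + (1 - γ) * ν x) :=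
            Finset.sum_congr rfl (fun x _ => heq x)
        _ = γ * (∑ x, ∑ x', M x x' * μ x') + (1 - γ) * ∑ x, ν x := by
            rw [Finset.sum_add_distrib, ← Finset.mul_sum, ← Finset.mul_sum]
        _ = γ * (∑ x', (∑ x, M x x') * μ x') + (1 - γ) := by
            rw [hν1, mul_one, Finset.sum_comm]
            congr 2; exact Finset.sum_congr rfl (fun x' _ => (Finset.sum_mul _ _ _).symm)
        _ = γ * ∑ x', μ x' + (1 - γ) := by
            congr 2; refine Finset.sum_congr rfl (fun x' _ => ?_)
            rw [hM1 x', one_mul]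
    nlinarith [this]
  exact ⟨(fun x => μ x), hμ0, hsum, heq⟩


lemma qreps_swap3 {X A I : Type*} [Fintype X] [Fintype A] [Fintype I] (f : X → A → I → ℝ) :
    (∑ x, ∑ a, ∑ i, f x a i) = ∑ i, ∑ x, ∑ a, f x a i := by
  rw [Finset.sum_comm (s := univ) (t := univ) (f := fun i x => ∑ a, f x a i)]
  exact Finset.sum_congr rfl (fun x _ => Finset.sum_comm)

/-- Weak duality core inequality. -/
lemma qreps_weak {X A : Type*} [Fintype X] [Fintype A] [Nonempty X] [Nonempty A]
    (P : X → A → X → ℝ) (r : X → A → ℝ) (γ : ℝ) (ν₀ : X → ℝ) (α η : ℝ)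
    (p₀ : X → A → ℝ) (π₀ : X → A → ℝ)
    (hα : 0 < α) (hη : 0 < η)
    (hp₀pos : ∀ x a, 0 < p₀ x a) (hp₀1 : ∑ x, ∑ a, p₀ x a = 1)
    (hπ₀pos : ∀ x a, 0 < π₀ x a)
    (p d : X → A → ℝ) (hp0 : ∀ x a, 0 ≤ p x a) (hp1 : ∑ x, ∑ a, p x a = 1)
    (hd0 : ∀ x a, 0 ≤ d x a)
    (hflow : ∀ x, ∑ a, d x a = γ * (∑ x', ∑ a', P x' a' x * p x' a') + (1 - γ) * ν₀ x)
    (Qθ : X → A → ℝ)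
    (hfeatQ : (∑ x, ∑ a, d x a * Qθ x a) = ∑ x, ∑ a, p x a * Qθ x a)
    (Vθ : X → ℝ)
    (hVθ : ∀ x, Vθ x = (1 / α) * Real.log (∑ a, π₀ x a * Real.exp (α * Qθ x a))) :
    (∑ x, ∑ a, p x a * r x a)
      - (1 / η) * (∑ x, ∑ a, (p x a * Real.log (p x a / p₀ x a) - p x a + p₀ x a))
      - (1 / α) * (∑ x, ∑ a, d x a * Real.log ((d x a / ∑ a', d x a') / π₀ x a))
    ≤ (1 / η) * Real.log (∑ x, ∑ a, p₀ x a *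
          Real.exp (η * (r x a + γ * (∑ x', P x a x' * Vθ x') - Qθ x a)))
      + (1 - γ) * ∑ x, ν₀ x * Vθ x := by
  classical
  have hZα : ∀ x, 0 < ∑ a, π₀ x a * Real.exp (α * Qθ x a) := fun x =>
    Finset.sum_pos (fun a _ => mul_pos (hπ₀pos x a) (Real.exp_pos _)) univ_nonempty
  have hlogZ : ∀ x, Real.log (∑ a, π₀ x a * Real.exp (α * Qθ x a)) = α * Vθ x := by
    intro x; rw [hVθ x]; field_simp
  -- row bound
  have row : ∀ x, (∑ a, d x a * Qθ x a) - (∑ a, d x a) * Vθ x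
      - (1 / α) * (∑ a, d x a * Real.log ((d x a / ∑ a', d x a') / π₀ x a)) ≤ 0 := by
    intro x
    rcases eq_or_lt_of_le (Finset.sum_nonneg (fun a (_ : a ∈ univ) => hd0 x a)) with hμ | hμ
    · have hz : ∀ a, d x a = 0 := by
        intro a
        exact (Finset.sum_eq_zero_iff_of_nonneg (fun a _ => hd0 x a)).mp hμ.symm a
          (Finset.mem_univ a)
      simp [hz]
    · have hg := qreps_gibbs_ineq (fun a => d x a / (∑ a', d x a')) (π₀ x)
        (fun a => α * Qθ x a)
        (fun a => div_nonneg (hd0 x a) hμ.le)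
        (by rw [← Finset.sum_div]; exact div_self hμ.ne') (hπ₀pos x)
      rw [hlogZ x] at hg
      have e1 : (∑ a, (d x a / (∑ a', d x a')) * (α * Qθ x a))
          = (α / (∑ a', d x a')) * ∑ a, d x a * Qθ x a := by
        rw [Finset.mul_sum]; exact Finset.sum_congr rfl (fun a _ => by ring)
      have e2 : (∑ a, (d x a / (∑ a', d x a')) *
            Real.log ((d x a / (∑ a', d x a')) / π₀ x a))
          = (1 / (∑ a', d x a')) * ∑ a, d x a *
              Real.log ((d x a / (∑ a', d x a')) / π₀ x a) := by
        rw [Finset.mul_sum]; exact Finset.sum_congr rfl (fun a _ => by ring)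
      rw [e1, e2] at hg
      have hg2 := mul_le_mul_of_nonneg_left hg (le_of_lt (div_pos hμ hα))
      have k1 : ((∑ a', d x a') / α) * ((α / (∑ a', d x a')) * (∑ a, d x a * Qθ x a)
            - (1 / (∑ a', d x a')) * ∑ a, d x a *
                Real.log ((d x a / (∑ a', d x a')) / π₀ x a))
          = (∑ a, d x a * Qθ x a)
            - (1 / α) * (∑ a, d x a * Real.log ((d x a / (∑ a', d x a')) / π₀ x a)) := by
        field_simp
      have k2 : ((∑ a', d x a') / α) * (α * Vθ x) = (∑ a', d x a') * Vθ x := by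
        field_simp
      rw [k1, k2] at hg2
      linarith
  -- global Gibbs bound
  have t1 : (∑ x, ∑ a, p x a * (η * (r x a + γ * (∑ x', P x a x' * Vθ x') - Qθ x a)))
      - (∑ x, ∑ a, p x a * Real.log (p x a / p₀ x a))
      ≤ Real.log (∑ x, ∑ a, p₀ x a *
          Real.exp (η * (r x a + γ * (∑ x', P x a x' * Vθ x') - Qθ x a))) := by
    have hg := qreps_gibbs_ineq (ι := X × A) (fun q => p q.1 q.2) (fun q => p₀ q.1 q.2)
      (fun q => η * (r q.1 q.2 + γ * (∑ x', P q.1 q.2 x' * Vθ x') - Qθ q.1 q.2))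
      (fun q => hp0 q.1 q.2) (by rw [Fintype.sum_prod_type]; exact hp1)
      (fun q => hp₀pos q.1 q.2)
    rw [Fintype.sum_prod_type, Fintype.sum_prod_type, Fintype.sum_prod_type] at hg
    exact hg
  -- rescaled version
  have t1' : (∑ x, ∑ a, p x a * (r x a + γ * (∑ x', P x a x' * Vθ x') - Qθ x a))
      - (1 / η) * (∑ x, ∑ a, p x a * Real.log (p x a / p₀ x a))
      ≤ (1 / η) * Real.log (∑ x, ∑ a, p₀ x a *
          Real.exp (η * (r x a + γ * (∑ x', P x a x' * Vθ x') - Qθ x a))) := by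
    have epull : (∑ x, ∑ a, p x a * (η * (r x a + γ * (∑ x', P x a x' * Vθ x') - Qθ x a)))
        = η * ∑ x, ∑ a, p x a * (r x a + γ * (∑ x', P x a x' * Vθ x') - Qθ x a) := by
      rw [Finset.mul_sum]
      refine Finset.sum_congr rfl (fun x _ => ?_)
      rw [Finset.mul_sum]
      exact Finset.sum_congr rfl (fun a _ => by ring)
    rw [epull] at t1
    have := mul_le_mul_of_nonneg_left t1 (le_of_lt (one_div_pos.mpr hη))
    have k : (1 / η) * (η * (∑ x, ∑ a, p x a * (r x a + γ * (∑ x', P x a x' * Vθ x') - Qθ x a))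
        - (∑ x, ∑ a, p x a * Real.log (p x a / p₀ x a)))
        = (∑ x, ∑ a, p x a * (r x a + γ * (∑ x', P x a x' * Vθ x') - Qθ x a))
          - (1 / η) * (∑ x, ∑ a, p x a * Real.log (p x a / p₀ x a)) := by
      field_simp
    rw [mul_sub] at this
    rw [mul_sub] at k
    linarith [this, k.ge, k.le]
  -- expansion of the linear term
  have expand : (∑ x, ∑ a, p x a * (r x a + γ * (∑ x', P x a x' * Vθ x') - Qθ x a))
      = (∑ x, ∑ a, p x a * r x a)
        + γ * (∑ x, ∑ a, p x a * (∑ x', P x a x' * Vθ x'))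
        - (∑ x, ∑ a, p x a * Qθ x a) := by
    have : ∀ x, (∑ a, p x a * (r x a + γ * (∑ x', P x a x' * Vθ x') - Qθ x a))
        = (∑ a, p x a * r x a) + γ * (∑ a, p x a * (∑ x', P x a x' * Vθ x'))
          - (∑ a, p x a * Qθ x a) := by
      intro x
      rw [Finset.mul_sum, ← Finset.sum_add_distrib, ← Finset.sum_sub_distrib]
      exact Finset.sum_congr rfl (fun a _ => by ring)
    rw [Finset.sum_congr rfl (fun x _ => this x), Finset.mul_sum (s := univ),
      ← Finset.sum_add_distrib, ← Finset.sum_sub_distrib]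
  -- the flow identity
  have idmid : γ * (∑ x, ∑ a, p x a * (∑ x', P x a x' * Vθ x'))
      = (∑ x, (∑ a, d x a) * Vθ x) - (1 - γ) * ∑ x, ν₀ x * Vθ x := by
    have e1 : (∑ x, ∑ a, p x a * (∑ x', P x a x' * Vθ x'))
        = ∑ x', (∑ x, ∑ a, P x a x' * p x a) * Vθ x' := by
      calc (∑ x, ∑ a, p x a * (∑ x', P x a x' * Vθ x'))
          = ∑ x, ∑ a, ∑ x', P x a x' * p x a * Vθ x' := by
            refine Finset.sum_congr rfl (fun x _ => Finset.sum_congr rfl (fun a _ => ?_))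
            rw [Finset.mul_sum]
            exact Finset.sum_congr rfl (fun x' _ => by ring)
        _ = ∑ x', ∑ x, ∑ a, P x a x' * p x a * Vθ x' := qreps_swap3 _
        _ = ∑ x', (∑ x, ∑ a, P x a x' * p x a) * Vθ x' := by
            refine Finset.sum_congr rfl (fun x' _ => ?_)
            rw [Finset.sum_mul]
            exact Finset.sum_congr rfl (fun x _ => (Finset.sum_mul _ _ _).symm)
    rw [e1, Finset.mul_sum]
    have e2 : ∀ x', γ * ((∑ x, ∑ a, P x a x' * p x a) * Vθ x')
        = (∑ a, d x' a) * Vθ x' - (1 - γ) * (ν₀ x' * Vθ x') := by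
      intro x'
      rw [hflow x']
      ring
    rw [Finset.sum_congr rfl (fun x' _ => e2 x'), Finset.sum_sub_distrib, ← Finset.mul_sum]
  -- row sums
  have t3 : (∑ x, ((∑ a, d x a * Qθ x a) - (∑ a, d x a) * Vθ x
      - (1 / α) * (∑ a, d x a * Real.log ((d x a / ∑ a', d x a') / π₀ x a)))) ≤ 0 :=
    Finset.sum_nonpos (fun x _ => row x)
  have t3exp : (∑ x, ((∑ a, d x a * Qθ x a) - (∑ a, d x a) * Vθ x
      - (1 / α) * (∑ a, d x a * Real.log ((d x a / ∑ a', d x a') / π₀ x a))))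
      = (∑ x, ∑ a, d x a * Qθ x a) - (∑ x, (∑ a, d x a) * Vθ x)
        - (1 / α) * (∑ x, ∑ a, d x a * Real.log ((d x a / ∑ a', d x a') / π₀ x a)) := by
    rw [Finset.sum_sub_distrib, Finset.sum_sub_distrib, ← Finset.mul_sum]
  -- D identity
  have idD : (∑ x, ∑ a, (p x a * Real.log (p x a / p₀ x a) - p x a + p₀ x a))
      = ∑ x, ∑ a, p x a * Real.log (p x a / p₀ x a) := by
    have : ∀ x, (∑ a, (p x a * Real.log (p x a / p₀ x a) - p x a + p₀ x a))
        = (∑ a, p x a * Real.log (p x a / p₀ x a)) - (∑ a, p x a) + (∑ a, p₀ x a) := by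
      intro x
      rw [Finset.sum_add_distrib, Finset.sum_sub_distrib]
    rw [Finset.sum_congr rfl (fun x _ => this x), Finset.sum_add_distrib,
      Finset.sum_sub_distrib, hp1, hp₀1]
    ring
  rw [idD]
  rw [expand] at t1'
  rw [t3exp] at t3
  linarith [t1', t3, idmid, hfeatQ]


lemma qreps_swapPV {X A : Type*} [Fintype X] [Fintype A]
    (P : X → A → X → ℝ) (p : X → A → ℝ) (f : X → ℝ) :
    (∑ x, ∑ a, p x a * (∑ x', P x a x' * f x'))
      = ∑ x', (∑ x, ∑ a, P x a x' * p x a) * f x' := by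
  calc (∑ x, ∑ a, p x a * (∑ x', P x a x' * f x'))
      = ∑ x, ∑ a, ∑ x', P x a x' * p x a * f x' := by
        refine Finset.sum_congr rfl (fun x _ => Finset.sum_congr rfl (fun a _ => ?_))
        rw [Finset.mul_sum]
        exact Finset.sum_congr rfl (fun x' _ => by ring)
    _ = ∑ x', ∑ x, ∑ a, P x a x' * p x a * f x' := by
        rw [Finset.sum_comm (s := univ) (t := univ)
          (f := fun x' x => ∑ a, P x a x' * p x a * f x')]
        exact Finset.sum_congr rfl (fun x _ => Finset.sum_comm)
    _ = ∑ x', (∑ x, ∑ a, P x a x' * p x a) * f x' := by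
        refine Finset.sum_congr rfl (fun x' _ => ?_)
        rw [Finset.sum_mul]
        exact Finset.sum_congr rfl (fun x _ => (Finset.sum_mul _ _ _).symm)


lemma qreps_dsum3 {X A : Type*} [Fintype X] [Fintype A] (c1 c2 c3 : ℝ) (f g h : X → A → ℝ) :
    (∑ x, ∑ a, (c1 * f x a + c2 * g x a + c3 * h x a))
      = c1 * (∑ x, ∑ a, f x a) + c2 * (∑ x, ∑ a, g x a) + c3 * (∑ x, ∑ a, h x a) := by
  rw [Finset.mul_sum, Finset.mul_sum, Finset.mul_sum, ← Finset.sum_add_distrib,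
    ← Finset.sum_add_distrib]
  refine Finset.sum_congr rfl (fun x _ => ?_)
  rw [Finset.mul_sum, Finset.mul_sum, Finset.mul_sum, ← Finset.sum_add_distrib,
    ← Finset.sum_add_distrib]

lemma qreps_ssum2 {A : Type*} [Fintype A] (c1 c2 : ℝ) (f g : A → ℝ) :
    (∑ a, (c1 * f a + c2 * g a)) = c1 * (∑ a, f a) + c2 * (∑ a, g a) := by
  rw [Finset.mul_sum, Finset.mul_sum, ← Finset.sum_add_distrib]

lemma qreps_ssum3 {A : Type*} [Fintype A] (c1 c2 c3 : ℝ) (f g h : A → ℝ) :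
    (∑ a, (c1 * f a + c2 * g a + c3 * h a))
      = c1 * (∑ a, f a) + c2 * (∑ a, g a) + c3 * (∑ a, h a) := by
  rw [Finset.mul_sum, Finset.mul_sum, Finset.mul_sum, ← Finset.sum_add_distrib,
    ← Finset.sum_add_distrib]

/-- Strong duality core: a Gibbs pair `(p̂, d̂)` at which the Lagrangian with
multiplier `W` (flow) and pairing `Qθ` (features) dominates the dual objective. -/
lemma qreps_strong_core {X A : Type*} [Fintype X] [Fintype A] [Nonempty X] [Nonempty A]
    (P : X → A → X → ℝ) (r : X → A → ℝ) (γ : ℝ) (ν₀ : X → ℝ) (α η : ℝ)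
    (p₀ : X → A → ℝ) (π₀ : X → A → ℝ)
    (hP0 : ∀ x a x', 0 ≤ P x a x') (hP1 : ∀ x a, ∑ x', P x a x' = 1)
    (hγ0 : 0 < γ) (hγ1 : γ < 1)
    (hν₀0 : ∀ x, 0 ≤ ν₀ x) (hν₀1 : ∑ x, ν₀ x = 1)
    (hα : 0 < α) (hη : 0 < η)
    (hp₀pos : ∀ x a, 0 < p₀ x a) (hp₀1 : ∑ x, ∑ a, p₀ x a = 1)
    (hπ₀pos : ∀ x a, 0 < π₀ x a)
    (Qθ : X → A → ℝ) (Vθ : X → ℝ)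
    (hVθ : ∀ x, Vθ x = (1 / α) * Real.log (∑ a, π₀ x a * Real.exp (α * Qθ x a)))
    (W : X → ℝ) :
    ∃ ph dh : X → A → ℝ, (∀ x a, 0 ≤ ph x a) ∧ (∑ x, ∑ a, ph x a) = 1
      ∧ (∀ x a, 0 ≤ dh x a) ∧ (∑ x, ∑ a, dh x a) = 1
      ∧ (1 / η) * Real.log (∑ x, ∑ a, p₀ x a *
            Real.exp (η * (r x a + γ * (∑ x', P x a x' * Vθ x') - Qθ x a)))
          + (1 - γ) * ∑ x, ν₀ x * Vθ x
        ≤ ((∑ x, ∑ a, ph x a * r x a)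
            - (1 / η) * (∑ x, ∑ a, (ph x a * Real.log (ph x a / p₀ x a) - ph x a + p₀ x a))
            - (1 / α) * (∑ x, ∑ a, dh x a * Real.log ((dh x a / ∑ a', dh x a') / π₀ x a)))
          + (∑ x, ((∑ a, dh x a) - γ * (∑ x', ∑ a', P x' a' x * ph x' a')
              - (1 - γ) * ν₀ x) * W x)
          + ((∑ x, ∑ a, dh x a * Qθ x a) - (∑ x, ∑ a, ph x a * Qθ x a)) := by
  classical
  obtain ⟨Vm, hVm⟩ : ∃ v : X → ℝ, v = fun x => -W x := ⟨_, rfl⟩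
  obtain ⟨Af, hAf⟩ : ∃ f : X → A → ℝ,
      f = fun x a => r x a + γ * (∑ x', P x a x' * Vm x') - Qθ x a := ⟨_, rfl⟩
  obtain ⟨Z, hZ⟩ : ∃ z : ℝ, z = ∑ x, ∑ a, p₀ x a * Real.exp (η * Af x a) := ⟨_, rfl⟩
  have hZpos : 0 < Z := by
    rw [hZ]
    refine Finset.sum_pos (fun x _ => Finset.sum_pos
      (fun a _ => mul_pos (hp₀pos x a) (Real.exp_pos _)) univ_nonempty) univ_nonempty
  obtain ⟨ph, hph⟩ : ∃ f : X → A → ℝ,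
      f = fun x a => p₀ x a * Real.exp (η * Af x a) / Z := ⟨_, rfl⟩
  have hph0 : ∀ x a, 0 < ph x a := by
    intro x a
    rw [hph]
    exact div_pos (mul_pos (hp₀pos x a) (Real.exp_pos _)) hZpos
  have hph1 : (∑ x, ∑ a, ph x a) = 1 := by
    rw [hph]
    simp only [← Finset.sum_div]
    rw [← hZ]
    exact div_self hZpos.ne'
  -- argmax of u = Vθ - Vm
  obtain ⟨u, hu⟩ : ∃ f : X → ℝ, f = fun x => Vθ x - Vm x := ⟨_, rfl⟩
  obtain ⟨xs, _, hxs⟩ := Finset.exists_max_image (univ : Finset X) u univ_nonempty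
  have hxs' : ∀ x, u x ≤ u xs := fun x => hxs x (Finset.mem_univ x)
  obtain ⟨Zx, hZx⟩ : ∃ z : ℝ, z = ∑ a, π₀ xs a * Real.exp (α * Qθ xs a) := ⟨_, rfl⟩
  have hZxpos : 0 < Zx := by
    rw [hZx]
    exact Finset.sum_pos (fun a _ => mul_pos (hπ₀pos xs a) (Real.exp_pos _)) univ_nonempty
  obtain ⟨dh, hdh⟩ : ∃ f : X → A → ℝ,
      f = fun x a => if x = xs then π₀ x a * Real.exp (α * Qθ x a) / Zx else 0 := ⟨_, rfl⟩
  have hdh0 : ∀ x a, 0 ≤ dh x a := by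
    intro x a
    rw [hdh]
    by_cases h : x = xs
    · simp only [h, if_true]
      exact le_of_lt (div_pos (mul_pos (hπ₀pos xs a) (Real.exp_pos _)) hZxpos)
    · simp [h]
  have hrowdh : ∀ x, (∑ a, dh x a) = if x = xs then 1 else 0 := by
    intro x
    by_cases h : x = xs
    · subst h
      simp only [hdh, if_true]
      rw [← Finset.sum_div, ← hZx]
      exact div_self hZxpos.ne'
    · simp [hdh, h]
  have hdh1 : (∑ x, ∑ a, dh x a) = 1 := by
    rw [Finset.sum_congr rfl (fun x _ => hrowdh x)]
    simp
  have hlogZx : Real.log Zx = α * Vθ xs := by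
    rw [hZx, hVθ xs]; field_simp
  refine ⟨ph, dh, fun x a => (hph0 x a).le, hph1, hdh0, hdh1, ?_⟩
  -- Step 1: the RHS equals (1/η) log Z + (1-γ) ∑ ν₀ Vm + u xs
  have hD : (∑ x, ∑ a, (ph x a * Real.log (ph x a / p₀ x a) - ph x a + p₀ x a))
      = η * (∑ x, ∑ a, ph x a * Af x a) - Real.log Z := by
    have hlog : ∀ x a, Real.log (ph x a / p₀ x a) = η * Af x a - Real.log Z := by
      intro x a
      have e : ph x a / p₀ x a = Real.exp (η * Af x a) / Z := by
        rw [hph]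
        show p₀ x a * Real.exp (η * Af x a) / Z / p₀ x a = _
        rw [mul_div_assoc]
        exact mul_div_cancel_left₀ _ (hp₀pos x a).ne'
      rw [e, Real.log_div (Real.exp_pos _).ne' hZpos.ne', Real.log_exp]
    have e2 : ∀ x a, ph x a * Real.log (ph x a / p₀ x a) - ph x a + p₀ x a
        = η * (ph x a * Af x a) + (-(Real.log Z + 1)) * ph x a + 1 * p₀ x a := by
      intro x a
      rw [hlog x a]
      ring
    rw [Finset.sum_congr rfl (fun x _ => Finset.sum_congr rfl (fun a _ => e2 x a)),
      qreps_dsum3, hph1, hp₀1]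
    ring
  have hHc : (∑ x, ∑ a, dh x a * Real.log ((dh x a / ∑ a', dh x a') / π₀ x a))
      = α * (∑ a, dh xs a * Qθ xs a) - α * Vθ xs := by
    have hrow1 : (∑ a', dh xs a') = 1 := by rw [hrowdh xs]; simp
    rw [Finset.sum_eq_single_of_mem xs (Finset.mem_univ xs) ?side]
    case side =>
      intro x _ hx
      refine Finset.sum_eq_zero (fun a _ => ?_)
      simp [hdh, hx]
    have e3 : ∀ a, dh xs a * Real.log ((dh xs a / ∑ a', dh xs a') / π₀ xs a)
        = α * (dh xs a * Qθ xs a) + (-(α * Vθ xs)) * dh xs a := by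
      intro a
      have hv : dh xs a = π₀ xs a * Real.exp (α * Qθ xs a) / Zx := by simp [hdh]
      have e : (dh xs a / ∑ a', dh xs a') / π₀ xs a = Real.exp (α * Qθ xs a) / Zx := by
        rw [hrow1, div_one, hv, mul_div_assoc]
        exact mul_div_cancel_left₀ _ (hπ₀pos xs a).ne'
      rw [e, Real.log_div (Real.exp_pos _).ne' hZxpos.ne', Real.log_exp, hlogZx]
      ring
    rw [Finset.sum_congr rfl (fun a _ => e3 a), qreps_ssum2, hrow1]
    ring
  have hflowterm : (∑ x, ((∑ a, dh x a) - γ * (∑ x', ∑ a', P x' a' x * ph x' a')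
        - (1 - γ) * ν₀ x) * W x)
      = -Vm xs + γ * (∑ x, ∑ a, ph x a * (∑ x', P x a x' * Vm x'))
        + (1 - γ) * ∑ x, ν₀ x * Vm x := by
    have hBW := qreps_swapPV P ph W
    have e4 : ∀ x, ((∑ a, dh x a) - γ * (∑ x', ∑ a', P x' a' x * ph x' a')
          - (1 - γ) * ν₀ x) * W x
        = 1 * (if x = xs then W x else 0) + (-γ) * ((∑ x', ∑ a', P x' a' x * ph x' a') * W x)
          + (-(1 - γ)) * (ν₀ x * W x) := by
      intro x
      rw [hrowdh x]
      by_cases h : x = xs <;> simp [h] <;> ring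
    rw [Finset.sum_congr rfl (fun x _ => e4 x), qreps_ssum3, Finset.sum_ite_eq'
      (Finset.univ : Finset X) xs W]
    have hswap : (∑ x, (∑ x', ∑ a', P x' a' x * ph x' a') * W x)
        = ∑ x, ∑ a, ph x a * (∑ x', P x a x' * W x') := by
      rw [qreps_swapPV P ph W]
    have hVmW : (∑ x, ∑ a, ph x a * (∑ x', P x a x' * Vm x'))
        = -(∑ x, ∑ a, ph x a * (∑ x', P x a x' * W x')) := by
      rw [← Finset.sum_neg_distrib]
      refine Finset.sum_congr rfl (fun x _ => ?_)
      rw [← Finset.sum_neg_distrib]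
      refine Finset.sum_congr rfl (fun a _ => ?_)
      rw [← mul_neg, ← Finset.sum_neg_distrib]
      congr 1
      refine Finset.sum_congr rfl (fun x' _ => ?_)
      simp [hVm]
    have hνW : (∑ x, ν₀ x * Vm x) = -(∑ x, ν₀ x * W x) := by
      rw [← Finset.sum_neg_distrib]
      refine Finset.sum_congr rfl (fun x _ => ?_)
      simp [hVm]
    rw [hswap, hVmW, hνW]
    simp only [Finset.mem_univ, if_true, hVm]
    ring
  have hdQ : (∑ x, ∑ a, dh x a * Qθ x a) = ∑ a, dh xs a * Qθ xs a := by
    rw [Finset.sum_eq_single_of_mem xs (Finset.mem_univ xs)]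
    intro x _ hx
    refine Finset.sum_eq_zero (fun a _ => ?_)
    simp [hdh, hx]
  have hE1 : ((∑ x, ∑ a, ph x a * r x a)
        - (1 / η) * (∑ x, ∑ a, (ph x a * Real.log (ph x a / p₀ x a) - ph x a + p₀ x a))
        - (1 / α) * (∑ x, ∑ a, dh x a * Real.log ((dh x a / ∑ a', dh x a') / π₀ x a)))
      + (∑ x, ((∑ a, dh x a) - γ * (∑ x', ∑ a', P x' a' x * ph x' a')
          - (1 - γ) * ν₀ x) * W x)
      + ((∑ x, ∑ a, dh x a * Qθ x a) - (∑ x, ∑ a, ph x a * Qθ x a))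
      = (1 / η) * Real.log Z + (1 - γ) * (∑ x, ν₀ x * Vm x) + u xs := by
    have hSAf : (∑ x, ∑ a, ph x a * Af x a)
        = (∑ x, ∑ a, ph x a * r x a)
          + γ * (∑ x, ∑ a, ph x a * (∑ x', P x a x' * Vm x'))
          - (∑ x, ∑ a, ph x a * Qθ x a) := by
      have : ∀ x a, ph x a * Af x a
          = 1 * (ph x a * r x a) + γ * (ph x a * (∑ x', P x a x' * Vm x'))
            + (-1) * (ph x a * Qθ x a) := by
        intro x a
        simp only [hAf]
        ring
      rw [Finset.sum_congr rfl (fun x _ => Finset.sum_congr rfl (fun a _ => this x a)),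
        qreps_dsum3]
      ring
    have c1 : (1 / η) * (η * (∑ x, ∑ a, ph x a * Af x a) - Real.log Z)
        = (∑ x, ∑ a, ph x a * Af x a) - (1 / η) * Real.log Z := by
      field_simp
    have c2 : (1 / α) * (α * (∑ a, dh xs a * Qθ xs a) - α * Vθ xs)
        = (∑ a, dh xs a * Qθ xs a) - Vθ xs := by
      field_simp
    have huxs : u xs = Vθ xs - Vm xs := by rw [hu]
    rw [hD, hHc, hflowterm, hdQ]
    linarith [c1, c2, hSAf, huxs]
  rw [hE1]
  -- Step 2: the dual objective is at most the value of the Lagrangian at (ph, dh)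
  have hexple : ∀ x a, η * (r x a + γ * (∑ x', P x a x' * Vθ x') - Qθ x a)
      ≤ η * Af x a + η * γ * u xs := by
    intro x a
    have hPu : (∑ x', P x a x' * Vθ x') - (∑ x', P x a x' * Vm x') ≤ u xs := by
      have e : (∑ x', P x a x' * Vθ x') - (∑ x', P x a x' * Vm x')
          = ∑ x', P x a x' * u x' := by
        rw [← Finset.sum_sub_distrib]
        exact Finset.sum_congr rfl (fun x' _ => by rw [hu]; ring)
      rw [e]
      calc (∑ x', P x a x' * u x') ≤ ∑ x', P x a x' * u xs :=
            Finset.sum_le_sum (fun x' _ =>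
              mul_le_mul_of_nonneg_left (hxs' x') (hP0 x a x'))
        _ = u xs := by rw [← Finset.sum_mul, hP1, one_mul]
    have hkey := mul_le_mul_of_nonneg_left hPu (mul_nonneg hη.le hγ0.le)
    have e0 : η * (r x a + γ * (∑ x', P x a x' * Vθ x') - Qθ x a)
        = η * Af x a + η * γ * ((∑ x', P x a x' * Vθ x') - (∑ x', P x a x' * Vm x')) := by
      simp only [hAf]
      ring
    rw [e0]
    linarith [hkey]
  have hZθpos : 0 < ∑ x, ∑ a, p₀ x a *
      Real.exp (η * (r x a + γ * (∑ x', P x a x' * Vθ x') - Qθ x a)) :=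
    Finset.sum_pos (fun x _ => Finset.sum_pos
      (fun a _ => mul_pos (hp₀pos x a) (Real.exp_pos _)) univ_nonempty) univ_nonempty
  have hsumle : (∑ x, ∑ a, p₀ x a *
        Real.exp (η * (r x a + γ * (∑ x', P x a x' * Vθ x') - Qθ x a)))
      ≤ Real.exp (η * γ * u xs) * Z := by
    have : ∀ x a, p₀ x a * Real.exp (η * (r x a + γ * (∑ x', P x a x' * Vθ x') - Qθ x a))
        ≤ Real.exp (η * γ * u xs) * (p₀ x a * Real.exp (η * Af x a)) := by
      intro x a
      have h1 : Real.exp (η * (r x a + γ * (∑ x', P x a x' * Vθ x') - Qθ x a))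
          ≤ Real.exp (η * Af x a) * Real.exp (η * γ * u xs) := by
        rw [← Real.exp_add]
        exact Real.exp_le_exp.mpr (hexple x a)
      calc p₀ x a * Real.exp (η * (r x a + γ * (∑ x', P x a x' * Vθ x') - Qθ x a))
          ≤ p₀ x a * (Real.exp (η * Af x a) * Real.exp (η * γ * u xs)) :=
            mul_le_mul_of_nonneg_left h1 (hp₀pos x a).le
        _ = Real.exp (η * γ * u xs) * (p₀ x a * Real.exp (η * Af x a)) := by ring
    calc (∑ x, ∑ a, p₀ x a *
          Real.exp (η * (r x a + γ * (∑ x', P x a x' * Vθ x') - Qθ x a)))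
        ≤ ∑ x, ∑ a, Real.exp (η * γ * u xs) * (p₀ x a * Real.exp (η * Af x a)) :=
          Finset.sum_le_sum (fun x _ => Finset.sum_le_sum (fun a _ => this x a))
      _ = Real.exp (η * γ * u xs) * Z := by
          rw [hZ, Finset.mul_sum]
          exact Finset.sum_congr rfl (fun x _ => (Finset.mul_sum _ _ _).symm)
  have hlogle : Real.log (∑ x, ∑ a, p₀ x a *
        Real.exp (η * (r x a + γ * (∑ x', P x a x' * Vθ x') - Qθ x a)))
      ≤ η * γ * u xs + Real.log Z := by
    calc Real.log (∑ x, ∑ a, p₀ x a *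
          Real.exp (η * (r x a + γ * (∑ x', P x a x' * Vθ x') - Qθ x a)))
        ≤ Real.log (Real.exp (η * γ * u xs) * Z) := Real.log_le_log hZθpos hsumle
      _ = η * γ * u xs + Real.log Z := by
          rw [Real.log_mul (Real.exp_pos _).ne' hZpos.ne', Real.log_exp]
  have hpart1 : (1 / η) * Real.log (∑ x, ∑ a, p₀ x a *
        Real.exp (η * (r x a + γ * (∑ x', P x a x' * Vθ x') - Qθ x a)))
      ≤ γ * u xs + (1 / η) * Real.log Z := by
    have := mul_le_mul_of_nonneg_left hlogle (le_of_lt (one_div_pos.mpr hη))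
    have k : (1 / η) * (η * γ * u xs + Real.log Z) = γ * u xs + (1 / η) * Real.log Z := by
      field_simp
    linarith [this, k.le, k.ge]
  have hpart2 : (1 - γ) * (∑ x, ν₀ x * Vθ x)
      ≤ (1 - γ) * (∑ x, ν₀ x * Vm x) + (1 - γ) * u xs := by
    have h1 : (∑ x, ν₀ x * Vθ x) = (∑ x, ν₀ x * Vm x) + ∑ x, ν₀ x * u x := by
      rw [← Finset.sum_add_distrib]
      refine Finset.sum_congr rfl (fun x _ => ?_)
      rw [hu]
      ring
    have h2 : (∑ x, ν₀ x * u x) ≤ u xs := by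
      calc (∑ x, ν₀ x * u x) ≤ ∑ x, ν₀ x * u xs :=
            Finset.sum_le_sum (fun x _ => mul_le_mul_of_nonneg_left (hxs' x) (hν₀0 x))
        _ = u xs := by rw [← Finset.sum_mul, hν₀1, one_mul]
    have h3 : (0:ℝ) ≤ 1 - γ := by linarith
    have h4 := mul_le_mul_of_nonneg_left h2 h3
    calc (1 - γ) * (∑ x, ν₀ x * Vθ x)
        = (1 - γ) * (∑ x, ν₀ x * Vm x) + (1 - γ) * (∑ x, ν₀ x * u x) := by rw [h1]; ring
      _ ≤ (1 - γ) * (∑ x, ν₀ x * Vm x) + (1 - γ) * u xs := by linarith [h4]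
  have hsplit : γ * u xs + (1 - γ) * u xs = u xs := by ring
  linarith [hpart1, hpart2, hsplit]


/-- Convexity inequality for the relative-entropy part. -/
lemma qreps_D_convex {X A : Type*} [Fintype X] [Fintype A]
    (p₀ : X → A → ℝ) (hp₀pos : ∀ x a, 0 < p₀ x a)
    (p₁ p₂ : X → A → ℝ) (hp₁ : ∀ x a, 0 ≤ p₁ x a) (hp₂ : ∀ x a, 0 ≤ p₂ x a)
    {l l' : ℝ} (hl : 0 ≤ l) (hl' : 0 ≤ l') (hll : l + l' = 1) :
    (∑ x, ∑ a, ((l * p₁ x a + l' * p₂ x a) *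
        Real.log ((l * p₁ x a + l' * p₂ x a) / p₀ x a)
        - (l * p₁ x a + l' * p₂ x a) + p₀ x a))
      ≤ l * (∑ x, ∑ a, (p₁ x a * Real.log (p₁ x a / p₀ x a) - p₁ x a + p₀ x a))
        + l' * (∑ x, ∑ a, (p₂ x a * Real.log (p₂ x a / p₀ x a) - p₂ x a + p₀ x a)) := by
  rw [Finset.mul_sum, Finset.mul_sum, ← Finset.sum_add_distrib]
  refine Finset.sum_le_sum (fun x _ => ?_)
  rw [Finset.mul_sum, Finset.mul_sum, ← Finset.sum_add_distrib]
  refine Finset.sum_le_sum (fun a _ => ?_)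
  have key := qreps_psi_combo hl hl' (hp₁ x a) (hp₂ x a) (hp₀pos x a).le (hp₀pos x a).le
    (fun h => absurd h (hp₀pos x a).ne') (fun h => absurd h (hp₀pos x a).ne')
  have e : l * p₀ x a + l' * p₀ x a = p₀ x a := by rw [← add_mul, hll, one_mul]
  rw [e] at key
  nlinarith [key, hll]

/-- Convexity inequality for the conditional-entropy part. -/
lemma qreps_Hc_convex {X A : Type*} [Fintype X] [Fintype A]
    (π₀ : X → A → ℝ) (hπ₀pos : ∀ x a, 0 < π₀ x a)
    (d₁ d₂ : X → A → ℝ) (hd₁ : ∀ x a, 0 ≤ d₁ x a) (hd₂ : ∀ x a, 0 ≤ d₂ x a)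
    {l l' : ℝ} (hl : 0 ≤ l) (hl' : 0 ≤ l') (hll : l + l' = 1) :
    (∑ x, ∑ a, (l * d₁ x a + l' * d₂ x a) *
        Real.log (((l * d₁ x a + l' * d₂ x a) / ∑ a', (l * d₁ x a' + l' * d₂ x a'))
          / π₀ x a))
      ≤ l * (∑ x, ∑ a, d₁ x a * Real.log ((d₁ x a / ∑ a', d₁ x a') / π₀ x a))
        + l' * (∑ x, ∑ a, d₂ x a * Real.log ((d₂ x a / ∑ a', d₂ x a') / π₀ x a)) := by
  have hsplit : ∀ (d : X → A → ℝ), (∀ x a, 0 ≤ d x a) → ∀ x a,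
      d x a * Real.log ((d x a / ∑ a', d x a') / π₀ x a)
        = d x a * Real.log (d x a / ∑ a', d x a') - d x a * Real.log (π₀ x a) := by
    intro d hd0 x a
    rcases eq_or_lt_of_le (hd0 x a) with h0 | h0
    · rw [← h0]; ring
    · have hμpos : 0 < ∑ a', d x a' :=
        lt_of_lt_of_le h0 (Finset.single_le_sum (fun a _ => hd0 x a) (Finset.mem_univ a))
      rw [Real.log_div (div_pos h0 hμpos).ne' (hπ₀pos x a).ne']
      ring
  have hc0 : ∀ x a, 0 ≤ l * d₁ x a + l' * d₂ x a := fun x a =>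
    add_nonneg (mul_nonneg hl (hd₁ x a)) (mul_nonneg hl' (hd₂ x a))
  have hμc : ∀ x, (∑ a', (l * d₁ x a' + l' * d₂ x a'))
      = l * (∑ a', d₁ x a') + l' * (∑ a', d₂ x a') := by
    intro x
    rw [Finset.sum_add_distrib, Finset.mul_sum, Finset.mul_sum]
  -- split the three double sums
  have split1 := fun x (a : A) => hsplit _ hc0 x a
  have e1 : (∑ x, ∑ a, (l * d₁ x a + l' * d₂ x a) *
      Real.log (((l * d₁ x a + l' * d₂ x a) / ∑ a', (l * d₁ x a' + l' * d₂ x a')) / π₀ x a))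
      = (∑ x, ∑ a, (l * d₁ x a + l' * d₂ x a) *
          Real.log ((l * d₁ x a + l' * d₂ x a) / ∑ a', (l * d₁ x a' + l' * d₂ x a')))
        - ∑ x, ∑ a, (l * d₁ x a + l' * d₂ x a) * Real.log (π₀ x a) := by
    rw [Finset.sum_congr rfl (fun x _ => Finset.sum_congr rfl (fun a _ => split1 x a)),
      ← Finset.sum_sub_distrib]
    exact Finset.sum_congr rfl (fun x _ => Finset.sum_sub_distrib _ _)
  have e2 : (∑ x, ∑ a, d₁ x a * Real.log ((d₁ x a / ∑ a', d₁ x a') / π₀ x a))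
      = (∑ x, ∑ a, d₁ x a * Real.log (d₁ x a / ∑ a', d₁ x a'))
        - ∑ x, ∑ a, d₁ x a * Real.log (π₀ x a) := by
    rw [Finset.sum_congr rfl (fun x _ => Finset.sum_congr rfl
      (fun a _ => hsplit _ hd₁ x a)), ← Finset.sum_sub_distrib]
    exact Finset.sum_congr rfl (fun x _ => Finset.sum_sub_distrib _ _)
  have e3 : (∑ x, ∑ a, d₂ x a * Real.log ((d₂ x a / ∑ a', d₂ x a') / π₀ x a))
      = (∑ x, ∑ a, d₂ x a * Real.log (d₂ x a / ∑ a', d₂ x a'))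
        - ∑ x, ∑ a, d₂ x a * Real.log (π₀ x a) := by
    rw [Finset.sum_congr rfl (fun x _ => Finset.sum_congr rfl
      (fun a _ => hsplit _ hd₂ x a)), ← Finset.sum_sub_distrib]
    exact Finset.sum_congr rfl (fun x _ => Finset.sum_sub_distrib _ _)
  -- ψ part
  have hψ : (∑ x, ∑ a, (l * d₁ x a + l' * d₂ x a) *
      Real.log ((l * d₁ x a + l' * d₂ x a) / ∑ a', (l * d₁ x a' + l' * d₂ x a')))
      ≤ l * (∑ x, ∑ a, d₁ x a * Real.log (d₁ x a / ∑ a', d₁ x a'))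
        + l' * (∑ x, ∑ a, d₂ x a * Real.log (d₂ x a / ∑ a', d₂ x a')) := by
    rw [Finset.mul_sum, Finset.mul_sum, ← Finset.sum_add_distrib]
    refine Finset.sum_le_sum (fun x _ => ?_)
    rw [Finset.mul_sum, Finset.mul_sum, ← Finset.sum_add_distrib]
    refine Finset.sum_le_sum (fun a _ => ?_)
    have hz1 : (∑ a', d₁ x a') = 0 → d₁ x a = 0 := fun h =>
      (Finset.sum_eq_zero_iff_of_nonneg (fun a _ => hd₁ x a)).mp h a (Finset.mem_univ a)
    have hz2 : (∑ a', d₂ x a') = 0 → d₂ x a = 0 := fun h =>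
      (Finset.sum_eq_zero_iff_of_nonneg (fun a _ => hd₂ x a)).mp h a (Finset.mem_univ a)
    have key := qreps_psi_combo hl hl' (hd₁ x a) (hd₂ x a)
      (Finset.sum_nonneg (fun a _ => hd₁ x a)) (Finset.sum_nonneg (fun a _ => hd₂ x a))
      hz1 hz2
    rw [hμc x]
    exact key
  -- linear part
  have hlin : (∑ x, ∑ a, (l * d₁ x a + l' * d₂ x a) * Real.log (π₀ x a))
      = l * (∑ x, ∑ a, d₁ x a * Real.log (π₀ x a))
        + l' * (∑ x, ∑ a, d₂ x a * Real.log (π₀ x a)) := by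
    rw [Finset.mul_sum, Finset.mul_sum, ← Finset.sum_add_distrib]
    refine Finset.sum_congr rfl (fun x _ => ?_)
    rw [Finset.mul_sum, Finset.mul_sum, ← Finset.sum_add_distrib]
    exact Finset.sum_congr rfl (fun a _ => by ring)
  rw [e1, e2, e3]
  nlinarith [hψ, hlin]

/-- Continuity of the "global" form of the objective. -/
lemma qreps_JG_cont {X A : Type*} [Fintype X] [Fintype A]
    (r p₀ π₀ : X → A → ℝ) (c1 c2 : ℝ) :
    Continuous (fun pd : (X → A → ℝ) × (X → A → ℝ) =>
      (∑ x, ∑ a, pd.1 x a * r x a)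
      - c1 * (∑ x, ∑ a, ((pd.1 x a / p₀ x a) * Real.log (pd.1 x a / p₀ x a) * p₀ x a
          - pd.1 x a + p₀ x a))
      - c2 * (∑ x, ((∑ a, pd.2 x a * Real.log (pd.2 x a))
          - (∑ a, pd.2 x a) * Real.log (∑ a, pd.2 x a)
          - ∑ a, pd.2 x a * Real.log (π₀ x a)))) := by
  have hev1 : ∀ (x : X) (a : A), Continuous (fun pd : (X → A → ℝ) × (X → A → ℝ) => pd.1 x a) :=
    fun x a => (continuous_apply a).comp ((continuous_apply x).comp continuous_fst)
  have hev2 : ∀ (x : X) (a : A), Continuous (fun pd : (X → A → ℝ) × (X → A → ℝ) => pd.2 x a) :=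
    fun x a => (continuous_apply a).comp ((continuous_apply x).comp continuous_snd)
  refine Continuous.sub (Continuous.sub ?_ (continuous_const.mul ?_)) (continuous_const.mul ?_)
  · exact continuous_finset_sum _ (fun x _ => continuous_finset_sum _
      (fun a _ => (hev1 x a).mul continuous_const))
  · refine continuous_finset_sum _ (fun x _ => continuous_finset_sum _ (fun a _ => ?_))
    refine Continuous.add (Continuous.sub ?_ (hev1 x a)) continuous_const
    exact (Real.continuous_mul_log.comp ((hev1 x a).div_const (p₀ x a))).mul continuous_const
  · refine continuous_finset_sum _ (fun x _ => ?_)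
    refine Continuous.sub (Continuous.sub ?_ ?_) ?_
    · exact continuous_finset_sum _ (fun a _ =>
        Real.continuous_mul_log.comp (hev2 x a))
    · exact Real.continuous_mul_log.comp (continuous_finset_sum _ (fun a _ => hev2 x a))
    · exact continuous_finset_sum _ (fun a _ => (hev2 x a).mul continuous_const)

/-- Rewriting of the conditional entropy on the nonnegative orthant. -/
lemma qreps_Hc_eq {X A : Type*} [Fintype X] [Fintype A]
    (π₀ : X → A → ℝ) (hπ₀pos : ∀ x a, 0 < π₀ x a)
    (d : X → A → ℝ) (hd0 : ∀ x a, 0 ≤ d x a) :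
    (∑ x, ∑ a, d x a * Real.log ((d x a / ∑ a', d x a') / π₀ x a))
      = ∑ x, ((∑ a, d x a * Real.log (d x a))
          - (∑ a, d x a) * Real.log (∑ a, d x a)
          - ∑ a, d x a * Real.log (π₀ x a)) := by
  refine Finset.sum_congr rfl (fun x _ => ?_)
  have hμ : 0 ≤ ∑ a', d x a' := Finset.sum_nonneg (fun a _ => hd0 x a)
  have key : ∀ a, d x a * Real.log ((d x a / ∑ a', d x a') / π₀ x a)
      = d x a * Real.log (d x a) - d x a * Real.log (∑ a', d x a')
        - d x a * Real.log (π₀ x a) := by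
    intro a
    rcases eq_or_lt_of_le (hd0 x a) with h0 | h0
    · rw [← h0]; ring
    · have hμpos : 0 < ∑ a', d x a' :=
        lt_of_lt_of_le h0 (Finset.single_le_sum (fun a _ => hd0 x a) (Finset.mem_univ a))
      rw [Real.log_div (div_pos h0 hμpos).ne' (hπ₀pos x a).ne',
        Real.log_div h0.ne' hμpos.ne']
      ring
  rw [Finset.sum_congr rfl (fun a _ => key a), Finset.sum_sub_distrib,
    Finset.sum_sub_distrib, ← Finset.sum_mul]

set_option maxHeartbeats 1000000 in
/-- Strong duality for the Q-REPS optimization problem: the supremum of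
⟨p,r⟩ − (1/η)·D(p‖p₀) − (1/α)·H(d‖d₀) over feasible pairs (p,d) of probability
distributions equals the infimum over θ ∈ ℝ^m of the logistic Bellman error G(θ). -/
theorem stmt1 {X A : Type*} [Fintype X] [Fintype A] [Nonempty X] [Nonempty A]
    {m : ℕ} (P : X → A → X → ℝ) (r : X → A → ℝ) (γ : ℝ) (ν₀ : X → ℝ)
    (φ : X → A → Fin m → ℝ) (α η : ℝ)
    (p₀ d₀ : X → A → ℝ) (π₀ : X → A → ℝ)
    (hP0 : ∀ x a x', 0 ≤ P x a x') (hP1 : ∀ x a, ∑ x', P x a x' = 1)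
    (hr : ∀ x a, 0 ≤ r x a ∧ r x a ≤ 1)
    (hγ0 : 0 < γ) (hγ1 : γ < 1)
    (hν₀0 : ∀ x, 0 ≤ ν₀ x) (hν₀1 : ∑ x, ν₀ x = 1)
    (hα : 0 < α) (hη : 0 < η)
    (hp₀pos : ∀ x a, 0 < p₀ x a) (hp₀1 : ∑ x, ∑ a, p₀ x a = 1)
    (hd₀pos : ∀ x a, 0 < d₀ x a) (hd₀1 : ∑ x, ∑ a, d₀ x a = 1)
    (hπ₀ : ∀ x a, π₀ x a = d₀ x a / ∑ a', d₀ x a')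
    (Q : (Fin m → ℝ) → X → A → ℝ)
    (hQ : ∀ θ x a, Q θ x a = ∑ i, θ i * φ x a i)
    (V : (Fin m → ℝ) → X → ℝ)
    (hV : ∀ θ x, V θ x = (1 / α) * Real.log (∑ a, π₀ x a * Real.exp (α * Q θ x a)))
    (Δ : (Fin m → ℝ) → X → A → ℝ)
    (hΔ : ∀ θ x a, Δ θ x a = r x a + γ * (∑ x', P x a x' * V θ x') - Q θ x a)
    (G : (Fin m → ℝ) → ℝ)
    (hG : ∀ θ, G θ = (1 / η) * Real.log (∑ x, ∑ a, p₀ x a * Real.exp (η * Δ θ x a))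
        + (1 - γ) * ∑ x, ν₀ x * V θ x)
    (D : (X → A → ℝ) → (X → A → ℝ) → ℝ)
    (hD : ∀ p p', D p p' =
      ∑ x, ∑ a, (p x a * Real.log (p x a / p' x a) - p x a + p' x a))
    (Hc : (X → A → ℝ) → (X → A → ℝ) → ℝ)
    (hHc : ∀ d d', Hc d d' = ∑ x, ∑ a,
      d x a * Real.log ((d x a / ∑ a', d x a') / (d' x a / ∑ a', d' x a')))
    (J : (X → A → ℝ) → (X → A → ℝ) → ℝ)
    (hJ : ∀ p d, J p d =
      (∑ x, ∑ a, p x a * r x a) - (1 / η) * D p p₀ - (1 / α) * Hc d d₀)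
    (Feas : (X → A → ℝ) → (X → A → ℝ) → Prop)
    (hFeas : ∀ p d, Feas p d ↔
      ((∀ x a, 0 ≤ p x a) ∧ (∑ x, ∑ a, p x a) = 1 ∧
       (∀ x a, 0 ≤ d x a) ∧ (∑ x, ∑ a, d x a) = 1 ∧
       (∀ x, ∑ a, d x a =
          γ * (∑ x', ∑ a', P x' a' x * p x' a') + (1 - γ) * ν₀ x) ∧
       (∀ i, (∑ x, ∑ a, d x a * φ x a i) = ∑ x, ∑ a, p x a * φ x a i))) :
    sSup {v : ℝ | ∃ p d, Feas p d ∧ v = J p d} = sInf (Set.range G) := by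
  classical
  -- basic facts about π₀
  have hd₀row : ∀ x, 0 < ∑ a', d₀ x a' := fun x =>
    Finset.sum_pos (fun a _ => hd₀pos x a) univ_nonempty
  have hπ₀pos : ∀ x a, 0 < π₀ x a := fun x a => by
    rw [hπ₀]; exact div_pos (hd₀pos x a) (hd₀row x)
  have hHcπ : ∀ dd : X → A → ℝ, Hc dd d₀
      = ∑ x, ∑ a, dd x a * Real.log ((dd x a / ∑ a', dd x a') / π₀ x a) := by
    intro dd
    rw [hHc]
    refine Finset.sum_congr rfl (fun x _ => Finset.sum_congr rfl (fun a _ => ?_))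
    rw [hπ₀ x a]
  -- feature swap identity
  have hQswap : ∀ (θ : Fin m → ℝ) (g : X → A → ℝ),
      (∑ x, ∑ a, g x a * Q θ x a) = ∑ i, θ i * (∑ x, ∑ a, g x a * φ x a i) := by
    intro θ g
    calc (∑ x, ∑ a, g x a * Q θ x a)
        = ∑ x, ∑ a, ∑ i, g x a * (θ i * φ x a i) := by
          refine Finset.sum_congr rfl (fun x _ => Finset.sum_congr rfl (fun a _ => ?_))
          rw [hQ θ x a, Finset.mul_sum]
      _ = ∑ i, ∑ x, ∑ a, g x a * (θ i * φ x a i) := qreps_swap3 _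
      _ = ∑ i, θ i * (∑ x, ∑ a, g x a * φ x a i) := by
          refine Finset.sum_congr rfl (fun i _ => ?_)
          rw [Finset.mul_sum]
          refine Finset.sum_congr rfl (fun x _ => ?_)
          rw [Finset.mul_sum]
          exact Finset.sum_congr rfl (fun a _ => by ring)
  -- G in explicit form
  have hGexp : ∀ θ, G θ = (1 / η) * Real.log (∑ x, ∑ a, p₀ x a *
      Real.exp (η * (r x a + γ * (∑ x', P x a x' * V θ x') - Q θ x a)))
      + (1 - γ) * ∑ x, ν₀ x * V θ x := by
    intro θ
    have e : (∑ x, ∑ a, p₀ x a * Real.exp (η * Δ θ x a))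
        = ∑ x, ∑ a, p₀ x a * Real.exp (η *
            (r x a + γ * (∑ x', P x a x' * V θ x') - Q θ x a)) := by
      refine Finset.sum_congr rfl (fun x _ => Finset.sum_congr rfl (fun a _ => ?_))
      rw [hΔ θ x a]
    rw [hG θ, e]
  -- weak duality
  have weak : ∀ p d, Feas p d → ∀ θ, J p d ≤ G θ := by
    intro p d hfe θ
    obtain ⟨hp0, hp1, hd0, hd1, hflow, hfeat⟩ := (hFeas p d).mp hfe
    have hfeatQ : (∑ x, ∑ a, d x a * Q θ x a) = ∑ x, ∑ a, p x a * Q θ x a := by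
      rw [hQswap θ d, hQswap θ p]
      exact Finset.sum_congr rfl (fun i _ => by rw [hfeat i])
    have hw := qreps_weak P r γ ν₀ α η p₀ π₀ hα hη hp₀pos hp₀1 hπ₀pos p d hp0 hp1 hd0
      hflow (Q θ) hfeatQ (V θ) (hV θ)
    rw [hJ p d, hD p p₀, hHcπ d, hGexp θ]
    exact hw
  -- feasible point via stationary distribution of the uniform policy
  have hcard : 0 < (Fintype.card A : ℝ) := by exact_mod_cast Fintype.card_pos
  obtain ⟨μ, hμ0, hμ1, hμfix⟩ := qreps_exists_stationary
    (fun x x' => (∑ a, P x' a x) / (Fintype.card A : ℝ))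
    (fun x x' => div_nonneg (Finset.sum_nonneg fun a _ => hP0 x' a x) hcard.le)
    (fun x' => by
      rw [← Finset.sum_div, Finset.sum_comm,
        Finset.sum_congr rfl (fun a (_ : a ∈ univ) => hP1 x' a)]
      rw [Finset.sum_const, nsmul_eq_mul, mul_one]
      exact div_self hcard.ne')
    hγ0 hγ1 ν₀ hν₀0 hν₀1
  obtain ⟨pf, hpf⟩ : ∃ f : X → A → ℝ, f = fun x a => μ x / (Fintype.card A : ℝ) := ⟨_, rfl⟩
  have hpf0 : ∀ x a, 0 ≤ pf x a := by
    intro x a; rw [hpf]; exact div_nonneg (hμ0 x) hcard.le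
  have hpfrow : ∀ x, (∑ a, pf x a) = μ x := by
    intro x
    rw [hpf]
    rw [Finset.sum_const, nsmul_eq_mul]
    field_simp
    rw [Finset.card_univ, mul_comm]
  have hpf1 : (∑ x, ∑ a, pf x a) = 1 := by
    rw [Finset.sum_congr rfl (fun x _ => hpfrow x)]
    exact hμ1
  have hFeaspf : Feas pf pf := by
    rw [hFeas]
    refine ⟨hpf0, hpf1, hpf0, hpf1, ?_, fun i => rfl⟩
    intro x
    rw [hpfrow x, hμfix x]
    congr 1
    congr 1
    refine Finset.sum_congr rfl (fun x' _ => ?_)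
    rw [div_mul_eq_mul_div, Finset.sum_mul, Finset.sum_div]
    refine Finset.sum_congr rfl (fun a _ => ?_)
    rw [hpf, mul_div_assoc]
  set Sv : Set ℝ := {v : ℝ | ∃ p d, Feas p d ∧ v = J p d} with hSv
  have hSne : Sv.Nonempty := ⟨J pf pf, pf, pf, hFeaspf, rfl⟩
  have hSbdd : BddAbove Sv := by
    refine ⟨G 0, ?_⟩
    rintro v ⟨p, d, hfe, rfl⟩
    exact weak p d hfe 0
  have hGbdd : BddBelow (Set.range G) := by
    refine ⟨J pf pf, ?_⟩
    rintro v ⟨θ, rfl⟩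
    exact weak pf pf hFeaspf θ
  have hGne : (Set.range G).Nonempty := ⟨G 0, ⟨0, rfl⟩⟩
  have dir1 : sSup Sv ≤ sInf (Set.range G) := by
    refine csSup_le hSne ?_
    rintro v ⟨p, d, hfe, rfl⟩
    refine le_csInf hGne ?_
    rintro b ⟨θ, rfl⟩
    exact weak p d hfe θ
  have dir2 : sInf (Set.range G) ≤ sSup Sv := by
    refine le_of_forall_pos_le_add (fun ε hε => ?_)

    -- evaluation maps are continuous
    have hev1 : ∀ (x : X) (a : A),
        Continuous (fun pd : (X → A → ℝ) × (X → A → ℝ) => pd.1 x a) :=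
      fun x a => (continuous_apply a).comp ((continuous_apply x).comp continuous_fst)
    have hev2 : ∀ (x : X) (a : A),
        Continuous (fun pd : (X → A → ℝ) × (X → A → ℝ) => pd.2 x a) :=
      fun x a => (continuous_apply a).comp ((continuous_apply x).comp continuous_snd)
    set K : Set ((X → A → ℝ) × (X → A → ℝ)) :=
      {pd | (∀ x a, 0 ≤ pd.1 x a) ∧ (∑ x, ∑ a, pd.1 x a) = 1
        ∧ (∀ x a, 0 ≤ pd.2 x a) ∧ (∑ x, ∑ a, pd.2 x a) = 1} with hK
    set Rm : ((X → A → ℝ) × (X → A → ℝ)) → ((X ⊕ Fin m) → ℝ) := fun pd => Sum.elim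
      (fun x => (∑ a, pd.2 x a) - γ * (∑ x', ∑ a', P x' a' x * pd.1 x' a')
        - (1 - γ) * ν₀ x)
      (fun i => (∑ x, ∑ a, pd.2 x a * φ x a i) - (∑ x, ∑ a, pd.1 x a * φ x a i)) with hRm
    set C : Set (((X ⊕ Fin m) → ℝ) × ℝ) :=
      {y | ∃ pd, pd ∈ K ∧ y.1 = Rm pd ∧ y.2 ≤ J pd.1 pd.2} with hCdef
    -- linearity helper
    have hdsum2 : ∀ (l l' : ℝ) (f g : X → A → ℝ),
        (∑ x, ∑ a, (l * f x a + l' * g x a))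
          = l * (∑ x, ∑ a, f x a) + l' * (∑ x, ∑ a, g x a) := by
      intro l l' f g
      rw [Finset.mul_sum, Finset.mul_sum, ← Finset.sum_add_distrib]
      refine Finset.sum_congr rfl (fun x _ => ?_)
      rw [Finset.mul_sum, Finset.mul_sum, ← Finset.sum_add_distrib]
    have hssum2 : ∀ (l l' : ℝ) (f g : A → ℝ),
        (∑ a, (l * f a + l' * g a)) = l * (∑ a, f a) + l' * (∑ a, g a) := by
      intro l l' f g
      rw [Finset.mul_sum, Finset.mul_sum, ← Finset.sum_add_distrib]
    -- concavity of J
    have hJconc : ∀ (p₁ d₁ p₂ d₂ : X → A → ℝ), (∀ x a, 0 ≤ p₁ x a) → (∀ x a, 0 ≤ d₁ x a) →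
        (∀ x a, 0 ≤ p₂ x a) → (∀ x a, 0 ≤ d₂ x a) →
        ∀ l l' : ℝ, 0 ≤ l → 0 ≤ l' → l + l' = 1 →
        l * J p₁ d₁ + l' * J p₂ d₂
          ≤ J (fun x a => l * p₁ x a + l' * p₂ x a)
              (fun x a => l * d₁ x a + l' * d₂ x a) := by
      intro p₁ d₁ p₂ d₂ hp₁ hd₁ hp₂ hd₂ l l' hl hl' hll
      rw [hJ, hJ, hJ, hD, hD, hD, hHcπ, hHcπ, hHcπ]
      have hDc := qreps_D_convex p₀ hp₀pos p₁ p₂ hp₁ hp₂ hl hl' hll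
      have hHcc := qreps_Hc_convex π₀ hπ₀pos d₁ d₂ hd₁ hd₂ hl hl' hll
      have hfirst : (∑ x, ∑ a, (l * p₁ x a + l' * p₂ x a) * r x a)
          = l * (∑ x, ∑ a, p₁ x a * r x a) + l' * (∑ x, ∑ a, p₂ x a * r x a) := by
        rw [← hdsum2 l l' (fun x a => p₁ x a * r x a) (fun x a => p₂ x a * r x a)]
        refine Finset.sum_congr rfl (fun x _ => Finset.sum_congr rfl (fun a _ => by ring))
      have key1 : (1 / η) * (∑ x, ∑ a, ((l * p₁ x a + l' * p₂ x a) *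
            Real.log ((l * p₁ x a + l' * p₂ x a) / p₀ x a)
            - (l * p₁ x a + l' * p₂ x a) + p₀ x a))
          ≤ l * ((1 / η) * (∑ x, ∑ a, (p₁ x a * Real.log (p₁ x a / p₀ x a) - p₁ x a + p₀ x a)))
            + l' * ((1 / η) * (∑ x, ∑ a,
                (p₂ x a * Real.log (p₂ x a / p₀ x a) - p₂ x a + p₀ x a))) := by
        have := mul_le_mul_of_nonneg_left hDc (le_of_lt (one_div_pos.mpr hη))
        calc (1 / η) * (∑ x, ∑ a, ((l * p₁ x a + l' * p₂ x a) *
              Real.log ((l * p₁ x a + l' * p₂ x a) / p₀ x a)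
              - (l * p₁ x a + l' * p₂ x a) + p₀ x a))
            ≤ (1 / η) * (l * (∑ x, ∑ a, (p₁ x a * Real.log (p₁ x a / p₀ x a) - p₁ x a + p₀ x a))
              + l' * (∑ x, ∑ a, (p₂ x a * Real.log (p₂ x a / p₀ x a) - p₂ x a + p₀ x a))) := this
          _ = _ := by ring
      have key2 : (1 / α) * (∑ x, ∑ a, (l * d₁ x a + l' * d₂ x a) *
            Real.log (((l * d₁ x a + l' * d₂ x a) / ∑ a', (l * d₁ x a' + l' * d₂ x a'))
              / π₀ x a))
          ≤ l * ((1 / α) * (∑ x, ∑ a, d₁ x a *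
                Real.log ((d₁ x a / ∑ a', d₁ x a') / π₀ x a)))
            + l' * ((1 / α) * (∑ x, ∑ a, d₂ x a *
                Real.log ((d₂ x a / ∑ a', d₂ x a') / π₀ x a))) := by
        have := mul_le_mul_of_nonneg_left hHcc (le_of_lt (one_div_pos.mpr hα))
        calc (1 / α) * (∑ x, ∑ a, (l * d₁ x a + l' * d₂ x a) *
              Real.log (((l * d₁ x a + l' * d₂ x a) / ∑ a', (l * d₁ x a' + l' * d₂ x a'))
                / π₀ x a))
            ≤ (1 / α) * (l * (∑ x, ∑ a, d₁ x a *
                  Real.log ((d₁ x a / ∑ a', d₁ x a') / π₀ x a))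
              + l' * (∑ x, ∑ a, d₂ x a *
                  Real.log ((d₂ x a / ∑ a', d₂ x a') / π₀ x a))) := this
          _ = _ := by ring
      linarith [hfirst, key1, key2]
    -- convexity of C
    have hCconv : Convex ℝ C := by
      rintro y₁ ⟨pd₁, ⟨h₁p0, h₁p1, h₁d0, h₁d1⟩, hR₁, hJ₁⟩
        y₂ ⟨pd₂, ⟨h₂p0, h₂p1, h₂d0, h₂d1⟩, hR₂, hJ₂⟩ l l' hl hl' hll
      refine ⟨(fun x a => l * pd₁.1 x a + l' * pd₂.1 x a,
               fun x a => l * pd₁.2 x a + l' * pd₂.2 x a), ⟨?_, ?_, ?_, ?_⟩, ?_, ?_⟩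
      · exact fun x a => add_nonneg (mul_nonneg hl (h₁p0 x a)) (mul_nonneg hl' (h₂p0 x a))
      · show (∑ x, ∑ a, (l * pd₁.1 x a + l' * pd₂.1 x a)) = 1
        rw [hdsum2, h₁p1, h₂p1, mul_one, mul_one]
        exact hll
      · exact fun x a => add_nonneg (mul_nonneg hl (h₁d0 x a)) (mul_nonneg hl' (h₂d0 x a))
      · show (∑ x, ∑ a, (l * pd₁.2 x a + l' * pd₂.2 x a)) = 1
        rw [hdsum2, h₁d1, h₂d1, mul_one, mul_one]
        exact hll
      · show (l • y₁ + l' • y₂).1 = _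
        rw [Prod.fst_add, Prod.smul_fst, Prod.smul_fst, hR₁, hR₂]
        funext j
        rcases j with x | i
        · have e1 : (l • Rm pd₁ + l' • Rm pd₂) (Sum.inl x)
              = l * Rm pd₁ (Sum.inl x) + l' * Rm pd₂ (Sum.inl x) := rfl
          rw [e1]
          simp only [hRm, Sum.elim_inl]
          have hrow : (∑ a, (l * pd₁.2 x a + l' * pd₂.2 x a))
              = l * (∑ a, pd₁.2 x a) + l' * (∑ a, pd₂.2 x a) :=
            hssum2 l l' (fun a => pd₁.2 x a) (fun a => pd₂.2 x a)
          have hB : (∑ x', ∑ a', P x' a' x * (l * pd₁.1 x' a' + l' * pd₂.1 x' a'))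
              = l * (∑ x', ∑ a', P x' a' x * pd₁.1 x' a')
                + l' * (∑ x', ∑ a', P x' a' x * pd₂.1 x' a') := by
            rw [← hdsum2 l l' (fun x' a' => P x' a' x * pd₁.1 x' a')
              (fun x' a' => P x' a' x * pd₂.1 x' a')]
            refine Finset.sum_congr rfl (fun x' _ =>
              Finset.sum_congr rfl (fun a' _ => by ring))
          rw [hrow, hB]
          linear_combination (-((1 - γ) * ν₀ x)) * hll
        · have e1 : (l • Rm pd₁ + l' • Rm pd₂) (Sum.inr i)
              = l * Rm pd₁ (Sum.inr i) + l' * Rm pd₂ (Sum.inr i) := rfl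
          rw [e1]
          simp only [hRm, Sum.elim_inr]
          have hd : (∑ x, ∑ a, (l * pd₁.2 x a + l' * pd₂.2 x a) * φ x a i)
              = l * (∑ x, ∑ a, pd₁.2 x a * φ x a i)
                + l' * (∑ x, ∑ a, pd₂.2 x a * φ x a i) := by
            rw [← hdsum2 l l' (fun x a => pd₁.2 x a * φ x a i)
              (fun x a => pd₂.2 x a * φ x a i)]
            refine Finset.sum_congr rfl (fun x _ =>
              Finset.sum_congr rfl (fun a _ => by ring))
          have hp : (∑ x, ∑ a, (l * pd₁.1 x a + l' * pd₂.1 x a) * φ x a i)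
              = l * (∑ x, ∑ a, pd₁.1 x a * φ x a i)
                + l' * (∑ x, ∑ a, pd₂.1 x a * φ x a i) := by
            rw [← hdsum2 l l' (fun x a => pd₁.1 x a * φ x a i)
              (fun x a => pd₂.1 x a * φ x a i)]
            refine Finset.sum_congr rfl (fun x _ =>
              Finset.sum_congr rfl (fun a _ => by ring))
          rw [hd, hp]
          ring
      · show (l • y₁ + l' • y₂).2 ≤ _
        rw [Prod.snd_add, Prod.smul_snd, Prod.smul_snd]
        have h1 : l • y₁.2 + l' • y₂.2 ≤ l * J pd₁.1 pd₁.2 + l' * J pd₂.1 pd₂.2 := by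
          simp only [smul_eq_mul]
          exact add_le_add (mul_le_mul_of_nonneg_left hJ₁ hl)
            (mul_le_mul_of_nonneg_left hJ₂ hl')
        exact h1.trans (hJconc pd₁.1 pd₁.2 pd₂.1 pd₂.2 h₁p0 h₁d0 h₂p0 h₂d0 l l' hl hl' hll)
    -- continuous surrogate for J
    obtain ⟨JG, hJGdef⟩ : ∃ f : ((X → A → ℝ) × (X → A → ℝ)) → ℝ, f = fun pd =>
        (∑ x, ∑ a, pd.1 x a * r x a)
        - (1 / η) * (∑ x, ∑ a, ((pd.1 x a / p₀ x a) * Real.log (pd.1 x a / p₀ x a) * p₀ x a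
            - pd.1 x a + p₀ x a))
        - (1 / α) * (∑ x, ((∑ a, pd.2 x a * Real.log (pd.2 x a))
            - (∑ a, pd.2 x a) * Real.log (∑ a, pd.2 x a)
            - ∑ a, pd.2 x a * Real.log (π₀ x a))) := ⟨_, rfl⟩
    have hJGcont : Continuous JG := by
      rw [hJGdef]; exact qreps_JG_cont r p₀ π₀ (1 / η) (1 / α)
    have hJGK : ∀ pd : (X → A → ℝ) × (X → A → ℝ), (∀ x a, 0 ≤ pd.2 x a) →
        J pd.1 pd.2 = JG pd := by
      intro pd hd0
      rw [hJ, hD, hHcπ, qreps_Hc_eq π₀ hπ₀pos pd.2 hd0, hJGdef]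
      have eD : (∑ x, ∑ a, (pd.1 x a * Real.log (pd.1 x a / p₀ x a) - pd.1 x a + p₀ x a))
          = ∑ x, ∑ a, ((pd.1 x a / p₀ x a) * Real.log (pd.1 x a / p₀ x a) * p₀ x a
              - pd.1 x a + p₀ x a) := by
        refine Finset.sum_congr rfl (fun x _ => Finset.sum_congr rfl (fun a _ => ?_))
        have h1 : pd.1 x a / p₀ x a * p₀ x a = pd.1 x a :=
          div_mul_cancel₀ _ (hp₀pos x a).ne'
        have h2 : pd.1 x a * Real.log (pd.1 x a / p₀ x a)
            = (pd.1 x a / p₀ x a) * Real.log (pd.1 x a / p₀ x a) * p₀ x a := by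
          calc pd.1 x a * Real.log (pd.1 x a / p₀ x a)
              = (pd.1 x a / p₀ x a * p₀ x a) * Real.log (pd.1 x a / p₀ x a) := by rw [h1]
            _ = _ := by ring
        rw [h2]
      rw [eD]
    -- Rm is continuous
    have hRmcont : Continuous Rm := by
      rw [hRm]
      refine continuous_pi (fun j => ?_)
      rcases j with x | i
      · simp only [Sum.elim_inl]
        refine Continuous.sub (Continuous.sub ?_ (continuous_const.mul ?_)) continuous_const
        · exact continuous_finset_sum _ (fun a _ => hev2 x a)
        · exact continuous_finset_sum _ (fun x' _ => continuous_finset_sum _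
            (fun a' _ => continuous_const.mul (hev1 x' a')))
      · simp only [Sum.elim_inr]
        refine Continuous.sub ?_ ?_
        · exact continuous_finset_sum _ (fun x _ => continuous_finset_sum _
            (fun a _ => (hev2 x a).mul continuous_const))
        · exact continuous_finset_sum _ (fun x _ => continuous_finset_sum _
            (fun a _ => (hev1 x a).mul continuous_const))
    -- K is compact
    have hentry : ∀ (g : X → A → ℝ), (∀ x a, 0 ≤ g x a) → (∑ x, ∑ a, g x a) = 1 →
        ∀ x a, g x a ≤ 1 := by
      intro g hg hsum x a
      have h1 : g x a ≤ ∑ a', g x a' :=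
        Finset.single_le_sum (f := fun a' => g x a') (fun a' _ => hg x a') (Finset.mem_univ a)
      have h2 : (∑ a', g x a') ≤ ∑ x', ∑ a', g x' a' :=
        Finset.single_le_sum (f := fun x' => ∑ a', g x' a')
          (fun x' _ => Finset.sum_nonneg (fun a' _ => hg x' a')) (Finset.mem_univ x)
      rw [hsum] at h2
      linarith
    have hKcl : IsClosed K := by
      have he : K = ((⋂ x, ⋂ a, {pd : (X → A → ℝ) × (X → A → ℝ) | 0 ≤ pd.1 x a})
            ∩ {pd | (∑ x, ∑ a, pd.1 x a) = 1})
          ∩ ((⋂ x, ⋂ a, {pd | 0 ≤ pd.2 x a}) ∩ {pd | (∑ x, ∑ a, pd.2 x a) = 1}) := by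
        ext pd
        simp only [hK, Set.mem_setOf_eq, Set.mem_inter_iff, Set.mem_iInter]
        tauto
      rw [he]
      refine IsClosed.inter (IsClosed.inter ?_ ?_) (IsClosed.inter ?_ ?_)
      · exact isClosed_iInter fun x => isClosed_iInter fun a =>
          isClosed_le continuous_const (hev1 x a)
      · exact isClosed_eq (continuous_finset_sum _ fun x _ =>
          continuous_finset_sum _ fun a _ => hev1 x a) continuous_const
      · exact isClosed_iInter fun x => isClosed_iInter fun a =>
          isClosed_le continuous_const (hev2 x a)
      · exact isClosed_eq (continuous_finset_sum _ fun x _ =>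
          continuous_finset_sum _ fun a _ => hev2 x a) continuous_const
    have hboxcpt : IsCompact ((Set.pi Set.univ fun _ : X => Set.pi Set.univ
          fun _ : A => Set.Icc (0:ℝ) 1) ×ˢ
        (Set.pi Set.univ fun _ : X => Set.pi Set.univ fun _ : A => Set.Icc (0:ℝ) 1)) :=
      (isCompact_univ_pi fun _ => isCompact_univ_pi fun _ => isCompact_Icc).prod
        (isCompact_univ_pi fun _ => isCompact_univ_pi fun _ => isCompact_Icc)
    have hKcpt : IsCompact K := by
      refine hboxcpt.of_isClosed_subset hKcl ?_
      rintro pd ⟨hp0, hp1, hd0, hd1⟩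
      constructor
      · intro x _
        intro a _
        exact ⟨hp0 x a, hentry pd.1 hp0 hp1 x a⟩
      · intro x _
        intro a _
        exact ⟨hd0 x a, hentry pd.2 hd0 hd1 x a⟩
    -- C is closed
    have hCcl : IsClosed C := by
      refine IsSeqClosed.isClosed ?_
      intro yn y hyn hlim
      choose pds hKs hRs hJs using hyn
      obtain ⟨pdl, hpdl, ψ, hψmono, hψt⟩ := hKcpt.tendsto_subseq hKs
      have h1 : Filter.Tendsto (fun n => (yn n).1) Filter.atTop (nhds y.1) :=
        (continuous_fst.tendsto y).comp hlim
      have h2 : Filter.Tendsto (fun n => (yn n).2) Filter.atTop (nhds y.2) :=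
        (continuous_snd.tendsto y).comp hlim
      refine ⟨pdl, hpdl, ?_, ?_⟩
      · have hA : Filter.Tendsto (fun n => Rm (pds (ψ n))) Filter.atTop (nhds (Rm pdl)) :=
          (hRmcont.tendsto pdl).comp hψt
        have hB : Filter.Tendsto (fun n => Rm (pds (ψ n))) Filter.atTop (nhds y.1) := by
          have he : (fun n => Rm (pds (ψ n))) = fun n => (yn (ψ n)).1 :=
            funext fun n => (hRs (ψ n)).symm
          rw [he]
          exact h1.comp hψmono.tendsto_atTop
        exact tendsto_nhds_unique hB hA
      · have hA : Filter.Tendsto (fun n => JG (pds (ψ n))) Filter.atTop (nhds (JG pdl)) :=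
          (hJGcont.tendsto pdl).comp hψt
        have hB : Filter.Tendsto (fun n => (yn (ψ n)).2) Filter.atTop (nhds y.2) :=
          h2.comp hψmono.tendsto_atTop
        have hle : ∀ n, (yn (ψ n)).2 ≤ JG (pds (ψ n)) := by
          intro n
          have hh := hJs (ψ n)
          rwa [hJGK _ (hKs (ψ n)).2.2.1] at hh
        have hfin := le_of_tendsto_of_tendsto' hB hA hle
        rwa [← hJGK pdl hpdl.2.2.1] at hfin
    -- the point to separate is not in C
    have hnotin : ((0 : (X ⊕ Fin m) → ℝ), sSup Sv + ε) ∉ C := by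
      rintro ⟨pd, ⟨hp0, hp1, hd0, hd1⟩, hR0, hJge⟩
      have hflow : ∀ x, (∑ a, pd.2 x a)
          = γ * (∑ x', ∑ a', P x' a' x * pd.1 x' a') + (1 - γ) * ν₀ x := by
        intro x
        have hh := congrFun hR0 (Sum.inl x)
        simp only [hRm, Sum.elim_inl, Pi.zero_apply] at hh
        linarith [hh.symm]
      have hfeat : ∀ i, (∑ x, ∑ a, pd.2 x a * φ x a i)
          = ∑ x, ∑ a, pd.1 x a * φ x a i := by
        intro i
        have hh := congrFun hR0 (Sum.inr i)
        simp only [hRm, Sum.elim_inr, Pi.zero_apply] at hh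
        linarith [hh.symm]
      have hfe : Feas pd.1 pd.2 := (hFeas _ _).mpr ⟨hp0, hp1, hd0, hd1, hflow, hfeat⟩
      have hmem : J pd.1 pd.2 ∈ Sv := ⟨pd.1, pd.2, hfe, rfl⟩
      have hup := le_csSup hSbdd hmem
      have hge : sSup Sv + ε ≤ J pd.1 pd.2 := hJge
      linarith
    -- separation
    obtain ⟨f, uu, hfu, hfC⟩ := geometric_hahn_banach_point_closed hCconv hCcl hnotin
    have hfdec : ∀ (c : (X ⊕ Fin m) → ℝ) (t : ℝ),
        f (c, t) = (∑ j, c j * f (Pi.single j 1, 0)) + t * f (0, 1) := by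
      intro c t
      have he : ((c, t) : ((X ⊕ Fin m) → ℝ) × ℝ)
          = (∑ j, c j • ((Pi.single j 1 : (X ⊕ Fin m) → ℝ), (0:ℝ)))
            + t • ((0 : (X ⊕ Fin m) → ℝ), (1:ℝ)) := by
        apply Prod.ext
        · simp only [Prod.fst_add, Prod.smul_fst, Prod.fst_sum, smul_zero, smul_eq_mul]
          funext k
          simp only [Finset.sum_apply, Pi.add_apply, Pi.smul_apply, Pi.single_apply,
            smul_eq_mul, mul_ite, mul_one, mul_zero, Pi.zero_apply, mul_zero, add_zero]
          rw [Finset.sum_ite_eq]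
          simp
        · simp only [Prod.snd_add, Prod.smul_snd, Prod.snd_sum, smul_zero, smul_eq_mul,
            mul_zero, Finset.sum_const_zero, zero_add, mul_one]
      rw [he, map_add, map_sum]
      simp only [map_smul, smul_eq_mul]
    have hRmpf : Rm (pf, pf) = 0 := by
      obtain ⟨_, _, _, _, hflowf, _⟩ := (hFeas pf pf).mp hFeaspf
      funext j
      rcases j with x | i
      · simp only [hRm, Sum.elim_inl, Pi.zero_apply]
        rw [hflowf x]
        ring
      · simp only [hRm, Sum.elim_inr, Pi.zero_apply]
        exact sub_self _
    have hy0 : ∀ t, t ≤ J pf pf → ((0 : (X ⊕ Fin m) → ℝ), t) ∈ C := fun t ht =>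
      ⟨(pf, pf), ⟨hpf0, hpf1, hpf0, hpf1⟩, hRmpf.symm, ht⟩
    have hτ : f ((0 : (X ⊕ Fin m) → ℝ), 1) < 0 := by
      rcases lt_trichotomy (f ((0 : (X ⊕ Fin m) → ℝ), 1)) 0 with h | h | h
      · exact h
      · exfalso
        have h1 := hfC _ (hy0 (J pf pf) le_rfl)
        have h2 := hfu
        rw [hfdec] at h1 h2
        simp only [Pi.zero_apply, zero_mul, Finset.sum_const_zero, zero_add] at h1 h2
        rw [h, mul_zero] at h1 h2
        linarith
      · exfalso
        have h1 := hfC _ (hy0 (min (J pf pf)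
          ((uu - 1) / f ((0 : (X ⊕ Fin m) → ℝ), 1))) (min_le_left _ _))
        rw [hfdec] at h1
        simp only [Pi.zero_apply, zero_mul, Finset.sum_const_zero, zero_add] at h1
        have h3 : min (J pf pf) ((uu - 1) / f ((0 : (X ⊕ Fin m) → ℝ), 1))
            * f ((0 : (X ⊕ Fin m) → ℝ), 1) ≤ uu - 1 := by
          have hmr := min_le_right (J pf pf) ((uu - 1) / f ((0 : (X ⊕ Fin m) → ℝ), 1))
          calc min (J pf pf) ((uu - 1) / f ((0 : (X ⊕ Fin m) → ℝ), 1))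
                * f ((0 : (X ⊕ Fin m) → ℝ), 1)
              ≤ ((uu - 1) / f ((0 : (X ⊕ Fin m) → ℝ), 1)) * f ((0 : (X ⊕ Fin m) → ℝ), 1) :=
                mul_le_mul_of_nonneg_right hmr h.le
            _ = uu - 1 := div_mul_cancel₀ _ h.ne'
        linarith
    -- multipliers
    set W : X → ℝ := fun x => f (Pi.single (Sum.inl x) 1, 0)
      / f ((0 : (X ⊕ Fin m) → ℝ), 1) with hW
    set θv : Fin m → ℝ := fun i => f (Pi.single (Sum.inr i) 1, 0)
      / f ((0 : (X ⊕ Fin m) → ℝ), 1) with hθv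
    have hmain : ∀ pd, pd ∈ K →
        J pd.1 pd.2 + (∑ x, Rm pd (Sum.inl x) * W x)
          + (∑ i, Rm pd (Sum.inr i) * θv i) < sSup Sv + ε := by
      intro pd hpd
      have h1 : uu < f (Rm pd, J pd.1 pd.2) := hfC _ ⟨pd, hpd, rfl, le_rfl⟩
      have h2 : f ((0 : (X ⊕ Fin m) → ℝ), sSup Sv + ε) < uu := hfu
      rw [hfdec] at h1 h2
      simp only [Pi.zero_apply, zero_mul, Finset.sum_const_zero, zero_add] at h2
      rw [Fintype.sum_sum_type] at h1
      by_contra hcon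
      push_neg at hcon
      have hmul := mul_le_mul_of_nonpos_right hcon hτ.le
      have hexp : (J pd.1 pd.2 + (∑ x, Rm pd (Sum.inl x) * W x)
            + (∑ i, Rm pd (Sum.inr i) * θv i)) * f ((0 : (X ⊕ Fin m) → ℝ), 1)
          = (∑ x, Rm pd (Sum.inl x) * f (Pi.single (Sum.inl x) 1, 0))
            + (∑ i, Rm pd (Sum.inr i) * f (Pi.single (Sum.inr i) 1, 0))
            + J pd.1 pd.2 * f ((0 : (X ⊕ Fin m) → ℝ), 1) := by
        rw [add_mul, add_mul, Finset.sum_mul, Finset.sum_mul]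
        have e1 : ∀ x : X, Rm pd (Sum.inl x) * W x * f ((0 : (X ⊕ Fin m) → ℝ), 1)
            = Rm pd (Sum.inl x) * f (Pi.single (Sum.inl x) 1, 0) := by
          intro x
          simp only [hW]
          rw [mul_assoc, div_mul_cancel₀ _ hτ.ne]
        have e2 : ∀ i : Fin m, Rm pd (Sum.inr i) * θv i * f ((0 : (X ⊕ Fin m) → ℝ), 1)
            = Rm pd (Sum.inr i) * f (Pi.single (Sum.inr i) 1, 0) := by
          intro i
          simp only [hθv]
          rw [mul_assoc, div_mul_cancel₀ _ hτ.ne]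
        rw [Finset.sum_congr rfl (fun x _ => e1 x), Finset.sum_congr rfl (fun i _ => e2 i)]
        ring
      linarith [h1, h2, hmul, hexp.le, hexp.ge]
    -- apply the strong core
    obtain ⟨ph, dh, hph0, hph1, hdh0, hdh1, hcore⟩ := qreps_strong_core P r γ ν₀ α η p₀ π₀
      hP0 hP1 hγ0 hγ1 hν₀0 hν₀1 hα hη hp₀pos hp₀1 hπ₀pos (Q θv) (V θv) (hV θv) W
    have hbd := hmain (ph, dh) ⟨hph0, hph1, hdh0, hdh1⟩
    have hflowterm : (∑ x, Rm (ph, dh) (Sum.inl x) * W x)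
        = ∑ x, ((∑ a, dh x a) - γ * (∑ x', ∑ a', P x' a' x * ph x' a')
            - (1 - γ) * ν₀ x) * W x := by
      refine Finset.sum_congr rfl (fun x _ => ?_)
      simp only [hRm, Sum.elim_inl]
    have hfeatterm : (∑ i, Rm (ph, dh) (Sum.inr i) * θv i)
        = (∑ x, ∑ a, dh x a * Q θv x a) - (∑ x, ∑ a, ph x a * Q θv x a) := by
      have e1 : ∀ i, Rm (ph, dh) (Sum.inr i) * θv i
          = θv i * (∑ x, ∑ a, dh x a * φ x a i)
            - θv i * (∑ x, ∑ a, ph x a * φ x a i) := by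
        intro i
        simp only [hRm, Sum.elim_inr]
        ring
      rw [Finset.sum_congr rfl (fun i _ => e1 i), Finset.sum_sub_distrib,
        ← hQswap θv dh, ← hQswap θv ph]
    have hJph : J ph dh = (∑ x, ∑ a, ph x a * r x a)
        - (1 / η) * (∑ x, ∑ a, (ph x a * Real.log (ph x a / p₀ x a) - ph x a + p₀ x a))
        - (1 / α) * (∑ x, ∑ a, dh x a * Real.log ((dh x a / ∑ a', dh x a') / π₀ x a)) := by
      rw [hJ, hD, hHcπ]
    have hGle : G θv < sSup Sv + ε := by
      rw [hGexp θv]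
      calc (1 / η) * Real.log (∑ x, ∑ a, p₀ x a *
            Real.exp (η * (r x a + γ * (∑ x', P x a x' * V θv x') - Q θv x a)))
          + (1 - γ) * ∑ x, ν₀ x * V θv x
          ≤ ((∑ x, ∑ a, ph x a * r x a)
              - (1 / η) * (∑ x, ∑ a, (ph x a * Real.log (ph x a / p₀ x a) - ph x a + p₀ x a))
              - (1 / α) * (∑ x, ∑ a, dh x a *
                  Real.log ((dh x a / ∑ a', dh x a') / π₀ x a)))
            + (∑ x, ((∑ a, dh x a) - γ * (∑ x', ∑ a', P x' a' x * ph x' a')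
                - (1 - γ) * ν₀ x) * W x)
            + ((∑ x, ∑ a, dh x a * Q θv x a) - (∑ x, ∑ a, ph x a * Q θv x a)) := hcore
        _ = J ph dh + (∑ x, Rm (ph, dh) (Sum.inl x) * W x)
            + (∑ i, Rm (ph, dh) (Sum.inr i) * θv i) := by
            rw [hJph, hflowterm, hfeatterm]
        _ < sSup Sv + ε := hbd
    calc sInf (Set.range G) ≤ G θv := csInf_le hGbdd ⟨θv, rfl⟩
      _ ≤ sSup Sv + ε := hGle.le

  exact le_antisymm dir1 dir2
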